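/- arXiv:1209.2820 — 3 statements merged into one kernel-verified Lean document; each statement's English description precedes it below -/
import Mathlib

section
/- (Inequality (8) in the proof of Theorem 1) Let K be a Markov kernel from a standard Borel input space 𝒳 to a standard Borel output space 𝒴, and let b : 𝒳 → [0, ∞) be an unbounded cost function. Then for every β ≥ β′ ≥ 0 and every ε with 0 < ε ≤ 1, the exact-cost capacity–cost function satisfies C(β) ≥ (1 − ε) C(β′). -/
open MeasureTheory ProbabilityTheory
open scoped ENNReal NNReal

/-- Kullback–Leibler divergence between two measures, valued in `ℝ≥0∞`. -/
noncomputable def klDiv {Ω : Type*} [MeasurableSpace Ω] (μ ν : Measure Ω) : ℝ≥0∞ :=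
  open scoped Classical in
  if μ ≪ ν ∧ Integrable (llr μ ν) μ then ENNReal.ofReal (∫ x, llr μ ν x ∂μ) else ⊤

/-- Mutual information of an input distribution `μ` and a channel (Markov kernel) `K`:
the KL divergence between the joint law `μ ⊗ₘ K` and the product of its two marginals. -/
noncomputable def mutualInfo {𝒳 𝒴 : Type*} [MeasurableSpace 𝒳] [MeasurableSpace 𝒴]
    (μ : Measure 𝒳) (K : Kernel 𝒳 𝒴) : ℝ≥0∞ :=
  klDiv (μ ⊗ₘ K) (((μ ⊗ₘ K).fst).prod ((μ ⊗ₘ K).snd))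

/-- Exact-cost capacity–cost function: the supremum of the mutual information over all
input probability measures with cost exactly `β`. -/
noncomputable def capacity {𝒳 𝒴 : Type*} [MeasurableSpace 𝒳] [MeasurableSpace 𝒴]
    (K : Kernel 𝒳 𝒴) (b : 𝒳 → ℝ≥0) (β : ℝ≥0) : ℝ≥0∞ :=
  ⨆ μ : {μ : Measure 𝒳 // IsProbabilityMeasure μ ∧ ∫⁻ x, (b x : ℝ≥0∞) ∂μ = (β : ℝ≥0∞)},
    mutualInfo μ.1 K

/-- Bounded-cost capacity–cost function: the supremum of the mutual information over all
input probability measures with cost at most `β` (the supremum over an empty set is `0`). -/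
noncomputable def capacityLE {𝒳 𝒴 : Type*} [MeasurableSpace 𝒳] [MeasurableSpace 𝒴]
    (K : Kernel 𝒳 𝒴) (b : 𝒳 → ℝ≥0) (β : ℝ≥0) : ℝ≥0∞ :=
  ⨆ μ : {μ : Measure 𝒳 // IsProbabilityMeasure μ ∧ ∫⁻ x, (b x : ℝ≥0∞) ∂μ ≤ (β : ℝ≥0∞)},
    mutualInfo μ.1 K

open Real
open scoped Classical

set_option linter.unusedSectionVars false
namespace TimeSharing

variable {α β : Type*} [MeasurableSpace α] [MeasurableSpace β]

lemma smul_prod' (c : ℝ≥0∞) (μ : Measure α) [SFinite μ] (ν : Measure β) [SFinite ν] :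
    (c • μ).prod ν = c • (μ.prod ν) := by
  ext s hs
  rw [Measure.prod_apply hs, Measure.smul_apply, smul_eq_mul, Measure.prod_apply hs,
    lintegral_smul_measure, smul_eq_mul]

lemma prod_withDensity_right (μ : Measure α) [SFinite μ] (q : Measure β) [SFinite q]
    {g : β → ℝ≥0∞} (hg : Measurable g) :
    μ.prod (q.withDensity g) = (μ.prod q).withDensity (fun z => g z.2) := by
  ext s hs
  rw [withDensity_apply _ hs, Measure.prod_apply hs,
    ← lintegral_indicator hs,
    lintegral_prod (s.indicator fun z => g z.2) (((hg.comp measurable_snd).indicator hs).aemeasurable)]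
  congr 1 with x
  rw [withDensity_apply _ (measurable_prodMk_left hs),
    ← lintegral_indicator (measurable_prodMk_left hs)]
  congr 1 with y

lemma snd_smul' (c : ℝ≥0∞) (ρ : Measure (α × β)) : (c • ρ).snd = c • ρ.snd := by
  rw [Measure.snd, Measure.snd, Measure.map_smul]

lemma integrable_min_llr_zero (μ ν : Measure α) [IsFiniteMeasure μ] [IsFiniteMeasure ν]
    (hμν : μ ≪ ν) : Integrable (fun x => min (llr μ ν x) 0) μ := by
  suffices h : Integrable (fun x => min (llr μ ν x) 0) (ν.withDensity (μ.rnDeriv ν)) by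
    rwa [Measure.withDensity_rnDeriv_eq μ ν hμν] at h
  rw [integrable_withDensity_iff (Measure.measurable_rnDeriv μ ν) (Measure.rnDeriv_lt_top μ ν)]
  refine Integrable.mono' (integrable_const 1) ?_ ?_
  · exact (((measurable_llr μ ν).min measurable_const).mul
      (Measure.measurable_rnDeriv μ ν).ennreal_toReal).aestronglyMeasurable
  · refine Filter.Eventually.of_forall fun x => ?_
    set r := (μ.rnDeriv ν x).toReal with hr
    have hr0 : 0 ≤ r := ENNReal.toReal_nonneg
    have : llr μ ν x = Real.log r := rfl
    rw [this]
    rcases le_or_gt 1 r with h1 | h1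
    · rw [min_eq_right (Real.log_nonneg h1)]
      simp
    rcases eq_or_lt_of_le hr0 with h0 | h0
    · rw [← h0]
      simp
    · have hlog : Real.log r < 0 := Real.log_neg h0 h1
      rw [min_eq_left hlog.le, Real.norm_eq_abs, abs_mul, abs_of_neg hlog, abs_of_pos h0]
      have h2 : Real.log r⁻¹ ≤ r⁻¹ - 1 := Real.log_le_sub_one_of_pos (by positivity)
      rw [Real.log_inv] at h2
      have h3 : r⁻¹ * r = 1 := inv_mul_cancel₀ h0.ne'
      nlinarith


lemma integral_llr_nonneg (μ ν : Measure α) [IsProbabilityMeasure μ] [IsProbabilityMeasure ν]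
    (hμν : μ ≪ ν) (h_int : Integrable (llr μ ν) μ) : 0 ≤ ∫ x, llr μ ν x ∂μ := by
  have h_exp : (fun x => rexp (- llr μ ν x)) =ᵐ[μ] fun x => (ν.rnDeriv μ x).toReal :=
    exp_neg_llr hμν
  have h_int_exp : Integrable (fun x => rexp (-llr μ ν x)) μ :=
    Measure.integrable_toReal_rnDeriv.congr h_exp.symm
  have h_le : ∫ x, (1 - rexp (-llr μ ν x)) ∂μ ≤ ∫ x, llr μ ν x ∂μ := by
    refine integral_mono ((integrable_const 1).sub h_int_exp) h_int fun x => ?_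
    have := Real.add_one_le_exp (-(llr μ ν x))
    simp only
    linarith
  have h_eval : ∫ x, (1 - rexp (-llr μ ν x)) ∂μ = 1 - ∫ x, rexp (-llr μ ν x) ∂μ := by
    rw [integral_sub (integrable_const 1) h_int_exp, integral_const]
    simp
  have h_le1 : ∫ x, rexp (-llr μ ν x) ∂μ ≤ 1 := by
    rw [integral_congr_ae h_exp]
    calc ∫ x, (ν.rnDeriv μ x).toReal ∂μ
        = ∫ x in Set.univ, (ν.rnDeriv μ x).toReal ∂μ := by rw [Measure.restrict_univ]
      _ ≤ (ν Set.univ).toReal := Measure.setIntegral_toReal_rnDeriv_le (measure_ne_top ν _)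
      _ = 1 := by simp
  linarith




lemma ac_of_smul_le {q' q : Measure α} {c : ℝ≥0∞} (hc0 : c ≠ 0) (hle : c • q' ≤ q) :
    q' ≪ q := by
  refine Measure.AbsolutelyContinuous.mk fun s hs h0 => ?_
  have := (hle s).trans_eq h0
  simp only [Measure.smul_apply, smul_eq_mul, nonpos_iff_eq_zero, mul_eq_zero] at this
  exact this.resolve_left hc0


lemma integrable_llr_of_smul_le (q' q : Measure α) [IsFiniteMeasure q'] [IsFiniteMeasure q]
    {c : ℝ≥0∞} (hc0 : c ≠ 0) (hctop : c ≠ ∞) (hle : c • q' ≤ q) :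
    Integrable (llr q' q) q' := by
  have hac : q' ≪ q := ac_of_smul_le hc0 hle
  have hb : ∀ᵐ y ∂q', q'.rnDeriv q y ≤ c⁻¹ := by
    refine hac.ae_le ?_
    filter_upwards [Measure.rnDeriv_le_one_of_le hle,
      Measure.rnDeriv_smul_left_of_ne_top q' q hctop] with y h1 h2
    rw [h2] at h1
    simp only [Pi.smul_apply, smul_eq_mul] at h1
    rwa [ENNReal.le_inv_iff_mul_le, mul_comm]
  set B : ℝ := max (Real.log (c⁻¹).toReal) 0 with hB
  have hmax : Integrable (fun y => max (llr q' q y) 0) q' := by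
    refine Integrable.mono' (integrable_const B)
      (((measurable_llr _ _).max measurable_const).aestronglyMeasurable) ?_
    filter_upwards [hb] with y hy
    rw [Real.norm_eq_abs, abs_of_nonneg (le_max_right _ _)]
    have hllr : llr q' q y = Real.log ((q'.rnDeriv q y).toReal) := rfl
    rw [hllr]
    have hyR : (q'.rnDeriv q y).toReal ≤ (c⁻¹).toReal :=
      ENNReal.toReal_mono (by simp [hc0]) hy
    by_cases h1 : (q'.rnDeriv q y).toReal ≤ 1
    · rw [max_eq_right (Real.log_nonpos ENNReal.toReal_nonneg h1)]
      exact le_max_right _ _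
    · push_neg at h1
      rw [max_eq_left (Real.log_nonneg h1.le)]
      exact le_max_of_le_left (Real.log_le_log (lt_trans one_pos h1) hyR)
  have hmin : Integrable (fun y => min (llr q' q y) 0) q' :=
    integrable_min_llr_zero q' q hac
  have : Integrable (fun y => max (llr q' q y) 0 + min (llr q' q y) 0) q' := hmax.add hmin
  refine this.congr (Filter.Eventually.of_forall fun y => ?_)
  simp only [max_add_min, add_zero]


lemma integrable_comp_snd_iff (ρ : Measure (α × β)) {f : β → ℝ} (hf : StronglyMeasurable f) :
    Integrable (fun z : α × β => f z.2) ρ ↔ Integrable f ρ.snd := by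
  rw [Measure.snd, integrable_map_measure hf.aestronglyMeasurable measurable_snd.aemeasurable]
  rfl


lemma integral_comp_snd (ρ : Measure (α × β)) {f : β → ℝ} (hf : StronglyMeasurable f) :
    ∫ z, f z.2 ∂ρ = ∫ y, f y ∂ρ.snd := by
  rw [Measure.snd, integral_map measurable_snd.aemeasurable hf.aestronglyMeasurable]


lemma integral_dirac_prod (x₀ : α) (ν : Measure β) [SFinite ν] {f : α × β → ℝ}
    (hf : StronglyMeasurable f) :
    ∫ z, f z ∂((Measure.dirac x₀).prod ν) = ∫ y, f (x₀, y) ∂ν := by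
  rw [Measure.dirac_prod, integral_map measurable_prodMk_left.aemeasurable
    hf.aestronglyMeasurable]


lemma integrable_dirac_prod_iff (x₀ : α) (ν : Measure β) [SFinite ν] {f : α × β → ℝ}
    (hf : StronglyMeasurable f) :
    Integrable f ((Measure.dirac x₀).prod ν) ↔ Integrable (fun y => f (x₀, y)) ν := by
  rw [Measure.dirac_prod, integrable_map_measure hf.aestronglyMeasurable
    measurable_prodMk_left.aemeasurable]
  rfl


section Mix

variable [MeasurableSingletonClass α]
variable (x₀ : α) (μ₁ : Measure α) [IsFiniteMeasure μ₁] (K : Kernel α β) [IsMarkovKernel K]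
  (q : Measure β) [IsFiniteMeasure q] (c s : ℝ≥0∞)

lemma dirac_compProd' (K : Kernel α β) [IsSFiniteKernel K] :
    (Measure.dirac x₀) ⊗ₘ K = (Measure.dirac x₀).prod (K x₀) := by
  ext s hs
  rw [Measure.dirac_compProd_apply hs, Measure.dirac_prod,
    Measure.map_apply measurable_prodMk_left hs]

lemma measurable_D : Measurable (fun z : α × β =>
    if z.1 = x₀ then (K x₀).rnDeriv q z.2 else (μ₁ ⊗ₘ K).rnDeriv (μ₁.prod q) z) := by
  refine Measurable.ite ?_ ((Measure.measurable_rnDeriv _ _).comp measurable_snd)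
    (Measure.measurable_rnDeriv _ _)
  exact measurable_fst (measurableSet_singleton x₀)

lemma fst_preimage_null (hμ₁ : μ₁ {x₀} = 0) : (μ₁.prod q) (Prod.fst ⁻¹' {x₀}) = 0 := by
  rw [← Set.prod_univ, Measure.prod_prod, hμ₁, zero_mul]

lemma compProd_fst_singleton_null (hμ₁ : μ₁ {x₀} = 0) :
    (μ₁ ⊗ₘ K) (Prod.fst ⁻¹' {x₀}) = 0 := by
  rw [← Measure.fst_apply (measurableSet_singleton x₀), Measure.fst_compProd, hμ₁]

lemma ae_fst_ne (hμ₁ : μ₁ {x₀} = 0) : ∀ᵐ z ∂(μ₁ ⊗ₘ K), z.1 ≠ x₀ := by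
  rw [ae_iff]
  convert compProd_fst_singleton_null x₀ μ₁ K hμ₁ using 2
  ext z; simp

lemma ae_fst_eq (ν : Measure β) [SFinite ν] :
    ∀ᵐ z ∂((Measure.dirac x₀).prod ν), z.1 = x₀ := by
  rw [ae_iff, Measure.dirac_prod, Measure.map_apply measurable_prodMk_left]
  · convert measure_empty (μ := ν)
    ext y; simp
  · exact (measurable_fst (measurableSet_singleton x₀)).compl

lemma rep (hμ₁ : μ₁ {x₀} = 0) (hac1 : μ₁ ⊗ₘ K ≪ μ₁.prod q)
    (hac0 : s ≠ 0 → K x₀ ≪ q) :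
    ((c • μ₁ + s • Measure.dirac x₀).prod q).withDensity
        (fun z => if z.1 = x₀ then (K x₀).rnDeriv q z.2 else (μ₁ ⊗ₘ K).rnDeriv (μ₁.prod q) z)
      = c • (μ₁ ⊗ₘ K) + s • ((Measure.dirac x₀).prod (K x₀)) := by
  have hP : (c • μ₁ + s • Measure.dirac x₀).prod q
      = c • (μ₁.prod q) + s • ((Measure.dirac x₀).prod q) := by
    rw [Measure.add_prod, smul_prod', smul_prod']
  have h1 : (μ₁.prod q).withDensity
      (fun z => if z.1 = x₀ then (K x₀).rnDeriv q z.2 else (μ₁ ⊗ₘ K).rnDeriv (μ₁.prod q) z)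
      = μ₁ ⊗ₘ K := by
    have hae : ∀ᵐ z ∂(μ₁.prod q), z.1 ≠ x₀ := by
      rw [ae_iff]
      convert fst_preimage_null x₀ μ₁ q hμ₁ using 2
      ext z; simp
    have : (fun z => if z.1 = x₀ then (K x₀).rnDeriv q z.2
        else (μ₁ ⊗ₘ K).rnDeriv (μ₁.prod q) z) =ᵐ[μ₁.prod q] (μ₁ ⊗ₘ K).rnDeriv (μ₁.prod q) := by
      filter_upwards [hae] with z hz
      rw [if_neg hz]
    rw [withDensity_congr_ae this, Measure.withDensity_rnDeriv_eq _ _ hac1]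
  have h2 : s ≠ 0 → ((Measure.dirac x₀).prod q).withDensity
      (fun z => if z.1 = x₀ then (K x₀).rnDeriv q z.2 else (μ₁ ⊗ₘ K).rnDeriv (μ₁.prod q) z)
      = (Measure.dirac x₀).prod (K x₀) := by
    intro hs
    have : (fun z => if z.1 = x₀ then (K x₀).rnDeriv q z.2
        else (μ₁ ⊗ₘ K).rnDeriv (μ₁.prod q) z) =ᵐ[(Measure.dirac x₀).prod q]
        (fun z => (K x₀).rnDeriv q z.2) := by
      filter_upwards [ae_fst_eq x₀ q] with z hz
      rw [if_pos hz]
    rw [withDensity_congr_ae this, ← prod_withDensity_right _ _ (Measure.measurable_rnDeriv _ _),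
      Measure.withDensity_rnDeriv_eq _ _ (hac0 hs)]
  rw [hP, withDensity_add_measure, withDensity_smul_measure, withDensity_smul_measure, h1]
  rcases eq_or_ne s 0 with hs | hs
  · simp [hs]
  · rw [h2 hs]

lemma ac_mix (hac1 : μ₁ ⊗ₘ K ≪ μ₁.prod q) (hac0 : s ≠ 0 → K x₀ ≪ q) :
    c • (μ₁ ⊗ₘ K) + s • ((Measure.dirac x₀).prod (K x₀))
      ≪ (c • μ₁ + s • Measure.dirac x₀).prod q := by
  refine Measure.AbsolutelyContinuous.mk fun B hB h0 => ?_
  rw [Measure.add_prod, smul_prod', smul_prod'] at h0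
  simp only [Measure.coe_add, Pi.add_apply, Measure.smul_apply, smul_eq_mul, add_eq_zero,
    mul_eq_zero] at h0
  simp only [Measure.coe_add, Pi.add_apply, Measure.smul_apply, smul_eq_mul, add_eq_zero,
    mul_eq_zero]
  constructor
  · rcases h0.1 with hc | hq
    · exact Or.inl hc
    · exact Or.inr (hac1 hq)
  · rcases eq_or_ne s 0 with hs | hs
    · exact Or.inl hs
    · refine Or.inr ?_
      have hq : ((Measure.dirac x₀).prod q) B = 0 := h0.2.resolve_left hs
      rw [Measure.dirac_prod, Measure.map_apply measurable_prodMk_left hB] at hq ⊢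
      exact hac0 hs hq

lemma ac_piece (hμ₁ : μ₁ {x₀} = 0) (hc0 : c ≠ 0)
    (hac : c • (μ₁ ⊗ₘ K) + s • ((Measure.dirac x₀).prod (K x₀))
      ≪ (c • μ₁ + s • Measure.dirac x₀).prod q) :
    μ₁ ⊗ₘ K ≪ μ₁.prod q := by
  refine Measure.AbsolutelyContinuous.mk fun B hB h0 => ?_
  set B' := B ∩ (Prod.fst ⁻¹' {x₀})ᶜ with hB'def
  have hB' : MeasurableSet B' := hB.inter (measurable_fst (measurableSet_singleton x₀)).compl
  have hPB' : ((c • μ₁ + s • Measure.dirac x₀).prod q) B' = 0 := by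
    rw [Measure.add_prod, smul_prod', smul_prod']
    simp only [Measure.coe_add, Pi.add_apply, Measure.smul_apply, smul_eq_mul]
    have h1 : (μ₁.prod q) B' = 0 :=
      le_antisymm (h0 ▸ measure_mono Set.inter_subset_left) zero_le
    have h2 : ((Measure.dirac x₀).prod q) B' = 0 := by
      rw [Measure.dirac_prod, Measure.map_apply measurable_prodMk_left hB']
      convert measure_empty (μ := q)
      ext y
      simp [hB'def]
    rw [h1, h2, mul_zero, mul_zero, add_zero]
  have hν : (c • (μ₁ ⊗ₘ K) + s • ((Measure.dirac x₀).prod (K x₀))) B' = 0 := hac hPB'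
  have hm₁B' : (μ₁ ⊗ₘ K) B' = 0 := by
    simp only [Measure.coe_add, Pi.add_apply, Measure.smul_apply, smul_eq_mul,
      add_eq_zero, mul_eq_zero] at hν
    exact hν.1.resolve_left hc0
  have hsub : B ⊆ B' ∪ Prod.fst ⁻¹' {x₀} := by
    intro z hz
    by_cases h : z.1 = x₀
    · exact Or.inr h
    · exact Or.inl ⟨hz, h⟩
  refine le_antisymm ?_ zero_le
  calc (μ₁ ⊗ₘ K) B ≤ (μ₁ ⊗ₘ K) (B' ∪ Prod.fst ⁻¹' {x₀}) := measure_mono hsub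
    _ ≤ (μ₁ ⊗ₘ K) B' + (μ₁ ⊗ₘ K) (Prod.fst ⁻¹' {x₀}) := measure_union_le _ _
    _ = 0 := by rw [hm₁B', compProd_fst_singleton_null x₀ μ₁ K hμ₁, add_zero]

lemma ac_slice {q' : Measure β} [IsFiniteMeasure q'] {g : β → ℝ≥0∞} (hg : Measurable g)
    (hq' : q' = q.withDensity g) (hac1 : μ₁ ⊗ₘ K ≪ μ₁.prod q)
    (hr : (μ₁ ⊗ₘ K).snd ≤ q') :
    μ₁ ⊗ₘ K ≪ μ₁.prod q' := by
  refine Measure.AbsolutelyContinuous.mk fun B hB h0 => ?_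
  set N := {y | g y = 0} with hNdef
  have hNm : MeasurableSet N := hg (measurableSet_singleton 0)
  have hq'N : q' N = 0 := by
    rw [hq', withDensity_apply _ hNm,
      setLIntegral_congr_fun hNm (fun y (hy : y ∈ N) => (hy : g y = 0))]
    simp
  rw [Measure.measure_prod_null hB] at h0
  have h1 : (μ₁.prod q) (B ∩ Prod.snd ⁻¹' Nᶜ) = 0 := by
    rw [Measure.measure_prod_null (hB.inter (measurable_snd hNm.compl))]
    filter_upwards [h0] with x hx
    have hx' : ∫⁻ y in Prod.mk x ⁻¹' B, g y ∂q = 0 := by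
      rw [← withDensity_apply _ (measurable_prodMk_left hB), ← hq']
      exact hx
    have hae : g =ᵐ[q.restrict (Prod.mk x ⁻¹' B)] 0 := (lintegral_eq_zero_iff hg).mp hx'
    have hres : (q.restrict (Prod.mk x ⁻¹' B)) Nᶜ = 0 := by
      rw [Filter.EventuallyEq, ae_iff] at hae
      have hset : (Nᶜ : Set β) = {y | ¬ g y = (0 : β → ℝ≥0∞) y} := by
        ext y; simp [hNdef]
      rw [hset]
      exact hae
    rw [Measure.restrict_apply hNm.compl] at hres
    convert hres using 2
    ext y; simp [Set.mem_preimage]; tauto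
    rfl
  have h2 : (μ₁ ⊗ₘ K) (B ∩ Prod.snd ⁻¹' Nᶜ) = 0 := hac1 h1
  have h3 : (μ₁ ⊗ₘ K) (Prod.snd ⁻¹' N) = 0 := by
    rw [← Measure.snd_apply hNm]
    exact le_antisymm ((hr N).trans hq'N.le) zero_le
  refine le_antisymm ?_ zero_le
  calc (μ₁ ⊗ₘ K) B ≤ (μ₁ ⊗ₘ K) ((B ∩ Prod.snd ⁻¹' Nᶜ) ∪ Prod.snd ⁻¹' N) := by
        refine measure_mono fun z hz => ?_
        by_cases h : z.2 ∈ N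
        · exact Or.inr h
        · exact Or.inl ⟨hz, h⟩
    _ ≤ (μ₁ ⊗ₘ K) (B ∩ Prod.snd ⁻¹' Nᶜ) + (μ₁ ⊗ₘ K) (Prod.snd ⁻¹' N) := measure_union_le _ _
    _ = 0 := by rw [h2, h3, add_zero]

end Mix

section LLR

variable {γ : Type*} [MeasurableSpace γ]

lemma llr_eq_log_of_withDensity {M P : Measure γ} [SigmaFinite P]
    {D : γ → ℝ≥0∞} (hD : Measurable D) (h : P.withDensity D = M) (hMP : M ≪ P) :
    llr M P =ᵐ[M] fun z => Real.log (D z).toReal := by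
  refine hMP.ae_le ?_
  have h1 : M.rnDeriv P =ᵐ[P] D := by
    rw [← h]; exact Measure.rnDeriv_withDensity P hD
  filter_upwards [h1] with z hz
  have hllr : llr M P z = Real.log (M.rnDeriv P z).toReal := rfl
  rw [hllr, hz]

lemma llr_withDensity_right' {m ρ ρ' : Measure γ}
    [IsFiniteMeasure m] [SigmaFinite ρ] [SigmaFinite ρ'] {g : γ → ℝ≥0∞}
    (hg : Measurable g) (hρ' : ρ' = ρ.withDensity g) (hmρ' : m ≪ ρ') (hmρ : m ≪ ρ) :
    llr m ρ' =ᵐ[m] fun z => llr m ρ z - Real.log (g z).toReal := by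
  have h1 : m.rnDeriv ρ' * ρ'.rnDeriv ρ =ᵐ[ρ] m.rnDeriv ρ := Measure.rnDeriv_mul_rnDeriv hmρ'
  have h2 : ρ'.rnDeriv ρ =ᵐ[ρ] g := by
    rw [hρ']; exact Measure.rnDeriv_withDensity ρ hg
  filter_upwards [hmρ.ae_le h1, hmρ.ae_le h2, Measure.rnDeriv_pos hmρ',
    hmρ'.ae_le (Measure.rnDeriv_lt_top m ρ'), Measure.rnDeriv_pos hmρ,
    hmρ.ae_le (Measure.rnDeriv_lt_top m ρ)] with z h1 h2 hx0 hxt hy0 hyt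
  rw [Pi.mul_apply, h2] at h1
  set x := m.rnDeriv ρ' z
  set y := m.rnDeriv ρ z
  have hg0 : g z ≠ 0 := by
    intro h
    rw [h, mul_zero] at h1
    exact hy0.ne' h1.symm
  have hgt : g z ≠ ∞ := by
    intro h
    rw [h, ENNReal.mul_top hx0.ne'] at h1
    exact hyt.ne h1.symm
  have hxy : x.toReal * (g z).toReal = y.toReal := by
    rw [← ENNReal.toReal_mul, h1]
  have hx0' : x.toReal ≠ 0 := ENNReal.toReal_ne_zero.mpr ⟨hx0.ne', hxt.ne⟩
  have hg0' : (g z).toReal ≠ 0 := ENNReal.toReal_ne_zero.mpr ⟨hg0, hgt⟩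
  have hlog : Real.log x.toReal + Real.log (g z).toReal = Real.log y.toReal := by
    rw [← Real.log_mul hx0' hg0', hxy]
  have he1 : llr m ρ' z = Real.log x.toReal := rfl
  have he2 : llr m ρ z = Real.log y.toReal := rfl
  rw [he1, he2]
  linarith

end LLR

section Split

variable {γ : Type*} [MeasurableSpace γ] {m₁ m₀ : Measure γ} {c s : ℝ≥0∞} {f : γ → ℝ}

lemma integrable_piece_left (hc0 : c ≠ 0) (hc : c ≠ ∞)
    (h : Integrable f (c • m₁ + s • m₀)) : Integrable f m₁ := by
  have := h.left_of_add_measure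
  rwa [integrable_smul_measure hc0 hc] at this

lemma integrable_piece_right (hs0 : s ≠ 0) (hs : s ≠ ∞)
    (h : Integrable f (c • m₁ + s • m₀)) : Integrable f m₀ := by
  have := h.right_of_add_measure
  rwa [integrable_smul_measure hs0 hs] at this

lemma integrable_mix (hc : c ≠ ∞) (hs : s ≠ ∞)
    (h₁ : Integrable f m₁) (h₀ : s = 0 ∨ Integrable f m₀) :
    Integrable f (c • m₁ + s • m₀) := by
  refine Integrable.add_measure ?_ ?_
  · rcases eq_or_ne c 0 with hc0 | hc0
    · simp [hc0]
    · exact (integrable_smul_measure hc0 hc).mpr h₁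
  · rcases h₀ with hs0 | h₀
    · simp [hs0]
    · rcases eq_or_ne s 0 with hs0 | hs0
      · simp [hs0]
      · exact (integrable_smul_measure hs0 hs).mpr h₀

lemma integral_mix (h₁ : Integrable f (c • m₁)) (h₀ : Integrable f (s • m₀)) :
    ∫ z, f z ∂(c • m₁ + s • m₀) = c.toReal * ∫ z, f z ∂m₁ + s.toReal * ∫ z, f z ∂m₀ := by
  rw [integral_add_measure h₁ h₀, integral_smul_measure, integral_smul_measure,
    smul_eq_mul, smul_eq_mul]

end Split

end TimeSharing


section Monster

variable {𝒳 𝒴 : Type*} [MeasurableSpace 𝒳] [MeasurableSingletonClass 𝒳] [MeasurableSpace 𝒴]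

lemma mutualInfo_mix_ge (K : Kernel 𝒳 𝒴) [IsMarkovKernel K]
    (μ' : Measure 𝒳) [IsProbabilityMeasure μ'] (x₀ : 𝒳) {ε : ℝ} (hε0 : 0 < ε) (hε1 : ε < 1) :
    ENNReal.ofReal (1 - ε) * mutualInfo μ' K
      ≤ mutualInfo ((1 - ENNReal.ofReal ε) • μ' + ENNReal.ofReal ε • Measure.dirac x₀) K := by
  classical
  set p : ℝ≥0∞ := ENNReal.ofReal ε with hp
  set c : ℝ≥0∞ := 1 - p with hc
  have hp0 : p ≠ 0 := by simp [hp, hε0, hε0.le, ENNReal.ofReal_eq_zero, not_le, hε0.ne']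
  have hpt : p ≠ ∞ := ENNReal.ofReal_ne_top
  have hp1 : p < 1 := by
    rw [hp, ← ENNReal.ofReal_one]
    exact (ENNReal.ofReal_lt_ofReal_iff one_pos).mpr hε1
  have hcofReal : c = ENNReal.ofReal (1 - ε) := by
    rw [hc, hp, ← ENNReal.ofReal_one, ← ENNReal.ofReal_sub _ hε0.le]
  have hc0 : c ≠ 0 := by
    rw [hcofReal, Ne, ENNReal.ofReal_eq_zero, not_le]
    linarith
  have hct : c ≠ ∞ := by rw [hcofReal]; exact ENNReal.ofReal_ne_top
  have hcε : c.toReal = 1 - ε := by rw [hcofReal, ENNReal.toReal_ofReal (by linarith)]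
  have hpε : p.toReal = ε := ENNReal.toReal_ofReal hε0.le
  have hcp : c + p = 1 := tsub_add_cancel_of_le hp1.le
  set δ : Measure 𝒳 := Measure.dirac x₀ with hδ
  set μ : Measure 𝒳 := c • μ' + p • δ with hμdef
  haveI hμprob : IsProbabilityMeasure μ := by
    constructor
    rw [hμdef]
    simp only [Measure.coe_add, Pi.add_apply, Measure.smul_apply, smul_eq_mul]
    rw [measure_univ, measure_univ, mul_one, mul_one]
    exact hcp
  set t : ℝ≥0∞ := μ' {x₀} with ht
  have htt : t ≠ ∞ := (measure_lt_top μ' _).ne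
  set μ₁ : Measure 𝒳 := μ'.restrict {x₀}ᶜ with hμ₁def
  have hμ₁0 : μ₁ {x₀} = 0 := by
    rw [hμ₁def, Measure.restrict_apply (measurableSet_singleton _)]
    simp
  have hμ'dec : μ' = μ₁ + t • δ := by
    conv_lhs => rw [← Measure.restrict_add_restrict_compl
      (μ := μ') (measurableSet_singleton x₀)]
    rw [Measure.restrict_singleton, add_comm, hμ₁def]
  set s : ℝ≥0∞ := c * t + p with hs
  have hs0 : s ≠ 0 := by simp [hs, hp0]
  have hst : s ≠ ∞ := ENNReal.add_ne_top.mpr ⟨ENNReal.mul_ne_top hct htt, hpt⟩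
  have hμdec : μ = c • μ₁ + s • δ := by
    rw [hμdef, hs]
    conv_lhs => rw [hμ'dec]
    rw [smul_add, smul_smul, add_smul, add_assoc]
  set m₁ : Measure (𝒳 × 𝒴) := μ₁ ⊗ₘ K with hm₁
  set m₀ : Measure (𝒳 × 𝒴) := δ.prod (K x₀) with hm₀
  have hνdec : μ ⊗ₘ K = c • m₁ + s • m₀ := by
    rw [hμdec, Measure.compProd_add_left, Measure.compProd_smul_left,
      Measure.compProd_smul_left, hm₁, hm₀, hδ, TimeSharing.dirac_compProd']
  have hν'dec : μ' ⊗ₘ K = m₁ + t • m₀ := by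
    conv_lhs => rw [hμ'dec]
    rw [Measure.compProd_add_left, Measure.compProd_smul_left, hm₁, hm₀, hδ,
      TimeSharing.dirac_compProd']
  set q : Measure 𝒴 := (μ ⊗ₘ K).snd with hq
  set q' : Measure 𝒴 := (μ' ⊗ₘ K).snd with hq'
  set r : Measure 𝒴 := m₁.snd with hr
  have hm₀snd : m₀.snd = K x₀ := by rw [hm₀]; exact Measure.snd_prod
  have hqdec : q = c • r + s • K x₀ := by
    rw [hq, hνdec, Measure.snd_add, TimeSharing.snd_smul', TimeSharing.snd_smul', hm₀snd, hr]
  have hq'dec : q' = r + t • K x₀ := by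
    rw [hq', hν'dec, Measure.snd_add, TimeSharing.snd_smul', hm₀snd, hr]
  have hqq' : q = c • q' + p • K x₀ := by
    rw [hqdec, hq'dec, smul_add, smul_smul, hs, add_assoc, ← add_smul]
  have hKle : p • K x₀ ≤ q := by rw [hqq']; exact Measure.le_add_left le_rfl
  have hKac : K x₀ ≪ q := TimeSharing.ac_of_smul_le hp0 hKle
  have hIKq : Integrable (llr (K x₀) q) (K x₀) :=
    TimeSharing.integrable_llr_of_smul_le _ _ hp0 hpt hKle
  have hq'le : c • q' ≤ q := by rw [hqq']; exact Measure.le_add_right le_rfl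
  have hq'ac : q' ≪ q := TimeSharing.ac_of_smul_le hc0 hq'le
  have hIq'q : Integrable (llr q' q) q' :=
    TimeSharing.integrable_llr_of_smul_le _ _ hc0 hct hq'le
  have hJ0 : 0 ≤ ∫ y, llr (K x₀) q y ∂(K x₀) := TimeSharing.integral_llr_nonneg _ _ hKac hIKq
  have hGnn : 0 ≤ ∫ y, llr q' q y ∂q' := TimeSharing.integral_llr_nonneg _ _ hq'ac hIq'q
  rw [mutualInfo, mutualInfo, Measure.fst_compProd, Measure.fst_compProd, ← hq, ← hq']
  by_cases hcase : (μ ⊗ₘ K ≪ μ.prod q) ∧ Integrable (llr (μ ⊗ₘ K) (μ.prod q)) (μ ⊗ₘ K)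
  swap
  · have htop : klDiv (μ ⊗ₘ K) (μ.prod q) = ⊤ := by rw [klDiv, if_neg hcase]
    rw [htop]
    exact le_top
  obtain ⟨hac, hint⟩ := hcase
  have hac1 : m₁ ≪ μ₁.prod q := by
    refine TimeSharing.ac_piece x₀ μ₁ K q c s hμ₁0 hc0 ?_
    rw [← hνdec, ← hμdec]
    exact hac
  set D := fun z : 𝒳 × 𝒴 =>
    if z.1 = x₀ then (K x₀).rnDeriv q z.2 else m₁.rnDeriv (μ₁.prod q) z with hD
  have hDm : Measurable D := TimeSharing.measurable_D x₀ μ₁ K q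
  have hrepq : (μ.prod q).withDensity D = μ ⊗ₘ K := by
    rw [hνdec]
    conv_lhs => rw [hμdec]
    exact TimeSharing.rep x₀ μ₁ K q c s hμ₁0 hac1 (fun _ => hKac)
  have hllrq : llr (μ ⊗ₘ K) (μ.prod q) =ᵐ[μ ⊗ₘ K] fun z => Real.log (D z).toReal :=
    TimeSharing.llr_eq_log_of_withDensity hDm hrepq hac
  have hm₁ac : m₁ ≪ μ ⊗ₘ K :=
    TimeSharing.ac_of_smul_le hc0 (by rw [hνdec]; exact Measure.le_add_right le_rfl)
  have hm₀ac : m₀ ≪ μ ⊗ₘ K :=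
    TimeSharing.ac_of_smul_le hs0 (by rw [hνdec]; exact Measure.le_add_left le_rfl)
  have hne : ∀ᵐ z ∂m₁, z.1 ≠ x₀ := TimeSharing.ae_fst_ne x₀ μ₁ K hμ₁0
  have heqq : ∀ᵐ z ∂m₀, z.1 = x₀ := TimeSharing.ae_fst_eq x₀ (K x₀)
  have h1 : llr (μ ⊗ₘ K) (μ.prod q) =ᵐ[m₁] llr m₁ (μ₁.prod q) := by
    filter_upwards [hm₁ac.ae_le hllrq, hne] with z hz hzne
    rw [hz, hD]
    simp only [if_neg hzne]
    rfl
  have h0 : llr (μ ⊗ₘ K) (μ.prod q) =ᵐ[m₀] fun z => llr (K x₀) q z.2 := by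
    filter_upwards [hm₀ac.ae_le hllrq, heqq] with z hz hzeq
    rw [hz, hD]
    simp only [if_pos hzeq]
    rfl
  have hintdec : Integrable (llr (μ ⊗ₘ K) (μ.prod q)) (c • m₁ + s • m₀) := by
    rw [← hνdec]; exact hint
  have hI₁ : Integrable (llr m₁ (μ₁.prod q)) m₁ :=
    (TimeSharing.integrable_piece_left hc0 hct hintdec).congr h1
  set J₁ := ∫ z, llr m₁ (μ₁.prod q) z ∂m₁ with hJ₁def
  set J₀ := ∫ y, llr (K x₀) q y ∂(K x₀) with hJ₀def
  have hsndint : (fun z : 𝒳 × 𝒴 => llr (K x₀) q z.2) = fun z : 𝒳 × 𝒴 => llr (K x₀) q z.2 := rfl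
  have hintm₀ : ∫ z, llr (μ ⊗ₘ K) (μ.prod q) z ∂m₀ = J₀ := by
    rw [integral_congr_ae h0, TimeSharing.integral_comp_snd m₀ (stronglyMeasurable_llr _ _),
      hm₀snd]
  have hRHS : ∫ z, llr (μ ⊗ₘ K) (μ.prod q) z ∂(μ ⊗ₘ K) = c.toReal * J₁ + s.toReal * J₀ := by
    have e1 : ∫ z, llr (μ ⊗ₘ K) (μ.prod q) z ∂(μ ⊗ₘ K)
        = ∫ z, llr (μ ⊗ₘ K) (μ.prod q) z ∂(c • m₁ + s • m₀) := by rw [← hνdec]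
    rw [e1, TimeSharing.integral_mix hintdec.left_of_add_measure hintdec.right_of_add_measure,
      integral_congr_ae h1, hintm₀]
  have hklq : klDiv (μ ⊗ₘ K) (μ.prod q) = ENNReal.ofReal (c.toReal * J₁ + s.toReal * J₀) := by
    rw [klDiv, if_pos ⟨hac, hint⟩, hRHS]
  -- q'-side
  set g := q'.rnDeriv q with hgdef
  have hgm : Measurable g := Measure.measurable_rnDeriv _ _
  have hwd : q' = q.withDensity g := (Measure.withDensity_rnDeriv_eq _ _ hq'ac).symm
  have hrle : r ≤ q' := by rw [hq'dec]; exact Measure.le_add_right le_rfl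
  have hac1' : m₁ ≪ μ₁.prod q' := TimeSharing.ac_slice μ₁ K q hgm hwd hac1 hrle
  have hac0' : t ≠ 0 → K x₀ ≪ q' := fun ht0 =>
    TimeSharing.ac_of_smul_le ht0 (by rw [hq'dec]; exact Measure.le_add_left le_rfl)
  have hacM : μ' ⊗ₘ K ≪ μ'.prod q' := by
    rw [hν'dec]
    conv_rhs => rw [hμ'dec]
    have hmix := TimeSharing.ac_mix x₀ μ₁ K q' 1 t hac1' hac0'
    simpa [one_smul] using hmix
  have hprodq' : μ₁.prod q' = (μ₁.prod q).withDensity (fun z => g z.2) := by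
    conv_lhs => rw [hwd]
    exact TimeSharing.prod_withDensity_right μ₁ q hgm
  have hd1 : llr m₁ (μ₁.prod q')
      =ᵐ[m₁] fun z => llr m₁ (μ₁.prod q) z - Real.log (g z.2).toReal :=
    TimeSharing.llr_withDensity_right' (hgm.comp measurable_snd) hprodq' hac1' hac1
  have hd2 : t ≠ 0 → llr (K x₀) q'
      =ᵐ[K x₀] fun y => llr (K x₀) q y - Real.log (g y).toReal :=
    fun ht0 => TimeSharing.llr_withDensity_right' hgm hwd (hac0' ht0) hKac
  have hIg : Integrable (llr q' q) r := hIq'q.mono_measure hrle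
  have hgsnd_eq : (fun z : 𝒳 × 𝒴 => Real.log (g z.2).toReal) = fun z : 𝒳 × 𝒴 => llr q' q z.2 :=
    rfl
  have hIgsnd : Integrable (fun z : 𝒳 × 𝒴 => Real.log (g z.2).toReal) m₁ := by
    rw [hgsnd_eq]
    exact (TimeSharing.integrable_comp_snd_iff m₁ (stronglyMeasurable_llr q' q)).mpr hIg
  have hIgK : t ≠ 0 → Integrable (llr q' q) (K x₀) := fun ht0 => by
    have h1 : t • K x₀ ≤ q' := by rw [hq'dec]; exact Measure.le_add_left le_rfl
    exact (integrable_smul_measure ht0 htt).mp (hIq'q.mono_measure h1)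
  have hI₁' : Integrable (llr m₁ (μ₁.prod q')) m₁ := (hI₁.sub hIgsnd).congr hd1.symm
  have hI₀' : t ≠ 0 → Integrable (llr (K x₀) q') (K x₀) := fun ht0 =>
    (hIKq.sub (hIgK ht0)).congr (hd2 ht0).symm
  set D' := fun z : 𝒳 × 𝒴 =>
    if z.1 = x₀ then (K x₀).rnDeriv q' z.2 else m₁.rnDeriv (μ₁.prod q') z with hD'
  have hD'm : Measurable D' := TimeSharing.measurable_D x₀ μ₁ K q'
  have hrepq' : (μ'.prod q').withDensity D' = μ' ⊗ₘ K := by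
    rw [hν'dec]
    conv_lhs => rw [hμ'dec]
    have hrepp := TimeSharing.rep x₀ μ₁ K q' 1 t hμ₁0 hac1' hac0'
    simpa [one_smul] using hrepp
  have hllrq' : llr (μ' ⊗ₘ K) (μ'.prod q') =ᵐ[μ' ⊗ₘ K] fun z => Real.log (D' z).toReal :=
    TimeSharing.llr_eq_log_of_withDensity hD'm hrepq' hacM
  have hm₁ac' : m₁ ≪ μ' ⊗ₘ K := by
    rw [hν'dec]
    exact (Measure.le_add_right le_rfl).absolutelyContinuous
  have hm₀ac' : t ≠ 0 → m₀ ≪ μ' ⊗ₘ K := fun ht0 => by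
    rw [hν'dec]
    exact TimeSharing.ac_of_smul_le ht0 (Measure.le_add_left le_rfl)
  have h1' : llr (μ' ⊗ₘ K) (μ'.prod q') =ᵐ[m₁] llr m₁ (μ₁.prod q') := by
    filter_upwards [hm₁ac'.ae_le hllrq', hne] with z hz hzne
    rw [hz, hD']
    simp only [if_neg hzne]
    rfl
  have h0' : t ≠ 0 → llr (μ' ⊗ₘ K) (μ'.prod q') =ᵐ[m₀] fun z => llr (K x₀) q' z.2 :=
    fun ht0 => by
    filter_upwards [(hm₀ac' ht0).ae_le hllrq', heqq] with z hz hzeq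
    rw [hz, hD']
    simp only [if_pos hzeq]
    rfl
  have hIm₀ : Integrable (llr (μ' ⊗ₘ K) (μ'.prod q')) (t • m₀) := by
    rcases eq_or_ne t 0 with ht0 | ht0
    · simp [ht0]
    · refine (integrable_smul_measure ht0 htt).mpr ?_
      refine Integrable.congr ?_ (h0' ht0).symm
      have := (TimeSharing.integrable_comp_snd_iff m₀
        (stronglyMeasurable_llr (K x₀) q')).mpr (by rw [hm₀snd]; exact hI₀' ht0)
      exact this
  have hIm₁ : Integrable (llr (μ' ⊗ₘ K) (μ'.prod q')) m₁ := hI₁'.congr h1'.symm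
  have hint' : Integrable (llr (μ' ⊗ₘ K) (μ'.prod q')) (μ' ⊗ₘ K) := by
    have hsum := hIm₁.add_measure hIm₀
    rwa [← hν'dec] at hsum
  set Gr := ∫ y, llr q' q y ∂r with hGrdef
  set GK := ∫ y, llr q' q y ∂(K x₀) with hGKdef
  have hItK : Integrable (llr q' q) (t • K x₀) :=
    hIq'q.mono_measure (by rw [hq'dec]; exact Measure.le_add_left le_rfl)
  have hGsplit : ∫ y, llr q' q y ∂q' = Gr + t.toReal * GK := by
    have e2 : ∫ y, llr q' q y ∂q' = ∫ y, llr q' q y ∂(r + t • K x₀) := by rw [← hq'dec]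
    rw [e2, integral_add_measure hIg hItK, integral_smul_measure, smul_eq_mul]
  have hJ1' : ∫ z, llr m₁ (μ₁.prod q') z ∂m₁ = J₁ - Gr := by
    rw [integral_congr_ae hd1, integral_sub hI₁ hIgsnd, hgsnd_eq,
      TimeSharing.integral_comp_snd m₁ (stronglyMeasurable_llr q' q)]
  have hLv : ∫ z, llr (μ' ⊗ₘ K) (μ'.prod q') z ∂(μ' ⊗ₘ K)
      = (J₁ - Gr) + t.toReal * ∫ z, llr (μ' ⊗ₘ K) (μ'.prod q') z ∂m₀ := by
    have e3 : ∫ z, llr (μ' ⊗ₘ K) (μ'.prod q') z ∂(μ' ⊗ₘ K)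
        = ∫ z, llr (μ' ⊗ₘ K) (μ'.prod q') z ∂(m₁ + t • m₀) := by rw [← hν'dec]
    rw [e3, integral_add_measure hIm₁ hIm₀, integral_congr_ae h1', hJ1',
      integral_smul_measure, smul_eq_mul]
  have hklq' : klDiv (μ' ⊗ₘ K) (μ'.prod q')
      = ENNReal.ofReal (∫ z, llr (μ' ⊗ₘ K) (μ'.prod q') z ∂(μ' ⊗ₘ K)) := by
    rw [klDiv, if_pos ⟨hacM, hint'⟩]
  rw [hklq, hklq', ← ENNReal.ofReal_mul (by linarith : (0:ℝ) ≤ 1 - ε)]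
  refine ENNReal.ofReal_le_ofReal ?_
  have hsreal : s.toReal = (1 - ε) * t.toReal + ε := by
    rw [hs, ENNReal.toReal_add (ENNReal.mul_ne_top hct htt) hpt, ENNReal.toReal_mul, hcε, hpε]
  have htR0 : 0 ≤ t.toReal := ENNReal.toReal_nonneg
  rw [hLv, hcε, hsreal]
  rw [hGsplit] at hGnn
  rcases eq_or_ne t 0 with ht0 | ht0
  · have htR : t.toReal = 0 := by rw [ht0]; simp
    rw [htR] at hGnn ⊢
    have key : 0 ≤ (1 - ε) * Gr := mul_nonneg (by linarith) (by linarith)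
    nlinarith [mul_nonneg hε0.le hJ0]
  · have hX : ∫ z, llr (μ' ⊗ₘ K) (μ'.prod q') z ∂m₀ = J₀ - GK := by
      rw [integral_congr_ae (h0' ht0),
        TimeSharing.integral_comp_snd m₀ (stronglyMeasurable_llr (K x₀) q'), hm₀snd,
        integral_congr_ae (hd2 ht0),
        show (fun y => llr (K x₀) q y - Real.log (g y).toReal)
          = fun y => llr (K x₀) q y - llr q' q y from rfl,
        integral_sub hIKq (hIgK ht0)]
    rw [hX]
    have key : 0 ≤ (1 - ε) * (Gr + t.toReal * GK) := mul_nonneg (by linarith) hGnn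
    nlinarith [mul_nonneg hε0.le hJ0]

end Monster



/-- Inequality (8) in the proof of Theorem 1: for a point-to-point channel between standard
Borel spaces with an unbounded cost function, for every `β ≥ β' ≥ 0` and every `0 < ε ≤ 1`,
the exact-cost capacity–cost function satisfies `C(β) ≥ (1 - ε) C(β')`. -/
theorem capacity_time_sharing_bound
    {𝒳 𝒴 : Type*} [MeasurableSpace 𝒳] [StandardBorelSpace 𝒳]
    [MeasurableSpace 𝒴] [StandardBorelSpace 𝒴]
    (K : Kernel 𝒳 𝒴) [IsMarkovKernel K]
    (b : 𝒳 → ℝ≥0) (hb : Measurable b)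
    (hb_unbounded : ∀ b₀ : ℝ≥0, ∃ x : 𝒳, b x = b₀)
    (β β' : ℝ≥0) (h : β' ≤ β)
    (ε : ℝ) (hε0 : 0 < ε) (hε1 : ε ≤ 1) :
    ENNReal.ofReal (1 - ε) * capacity K b β' ≤ capacity K b β := by
  rcases eq_or_lt_of_le hε1 with heq | hlt
  · simp [heq]
  have main : ∀ μp : {ρ : Measure 𝒳 //
      IsProbabilityMeasure ρ ∧ ∫⁻ x, (b x : ℝ≥0∞) ∂ρ = (β' : ℝ≥0∞)},
      ENNReal.ofReal (1 - ε) * mutualInfo μp.1 K ≤ capacity K b β := by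
    rintro ⟨μ', hprob, hcost⟩
    haveI := hprob
    set e : ℝ≥0 := ε.toNNReal with he
    have he0 : e ≠ 0 := (Real.toNNReal_pos.mpr hε0).ne'
    have heR : (e : ℝ) = ε := Real.coe_toNNReal ε hε0.le
    have he1 : e ≤ 1 := by
      rw [← NNReal.coe_le_coe, heR, NNReal.coe_one]; exact hε1
    set b₀ : ℝ≥0 := (β - (1 - e) * β') / e with hb₀
    obtain ⟨x₀, hx₀⟩ := hb_unbounded b₀
    set μ : Measure 𝒳 := (1 - ENNReal.ofReal ε) • μ' + ENNReal.ofReal ε • Measure.dirac x₀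
      with hμdef
    have hpe : ENNReal.ofReal ε = (e : ℝ≥0∞) := rfl
    have hple : ENNReal.ofReal ε ≤ 1 := by
      rw [hpe, ← ENNReal.coe_one, ENNReal.coe_le_coe]; exact he1
    haveI hμprob : IsProbabilityMeasure μ := by
      constructor
      rw [hμdef]
      simp only [Measure.coe_add, Pi.add_apply, Measure.smul_apply, smul_eq_mul]
      rw [measure_univ, measure_univ, mul_one, mul_one]
      exact tsub_add_cancel_of_le hple
    have hmul : (1 - e) * β' ≤ β := by
      calc (1 - e) * β' ≤ 1 * β' := mul_le_mul_left tsub_le_self _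
        _ = β' := one_mul _
        _ ≤ β := h
    have hcost2 : ∫⁻ x, (b x : ℝ≥0∞) ∂μ = (β : ℝ≥0∞) := by
      rw [hμdef, lintegral_add_measure, lintegral_smul_measure, lintegral_smul_measure,
        lintegral_dirac' x₀ hb.coe_nnreal_ennreal, hcost, hx₀, hpe, smul_eq_mul, smul_eq_mul]
      rw [← ENNReal.coe_one, ← ENNReal.coe_sub, ← ENNReal.coe_mul, ← ENNReal.coe_mul,
        ← ENNReal.coe_add, ENNReal.coe_inj]
      rw [hb₀, mul_comm (e : ℝ≥0), div_mul_cancel₀ _ he0]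
      exact add_tsub_cancel_of_le hmul
    refine le_trans (mutualInfo_mix_ge K μ' x₀ hε0 hlt) ?_
    rw [capacity]
    exact le_iSup (fun ρ : {ρ : Measure 𝒳 //
      IsProbabilityMeasure ρ ∧ ∫⁻ x, (b x : ℝ≥0∞) ∂ρ = (β : ℝ≥0∞)} => mutualInfo ρ.1 K)
      ⟨μ, hμprob, hcost2⟩
  calc ENNReal.ofReal (1 - ε) * capacity K b β'
      = ⨆ μp : {ρ : Measure 𝒳 //
          IsProbabilityMeasure ρ ∧ ∫⁻ x, (b x : ℝ≥0∞) ∂ρ = (β' : ℝ≥0∞)},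
        ENNReal.ofReal (1 - ε) * mutualInfo μp.1 K := by
        rw [capacity, ENNReal.mul_iSup]
    _ ≤ capacity K b β := iSup_le main
end

section
/- (Theorem 2: adaptive interference distributions) Consider a k-user memoryless interference channel given by a Markov kernel K from (ℝⁿ)^k to a standard Borel output space 𝒴₁, together with positive scaling constants α₂, …, α_k and an unbounded cost function b on ℝⁿ. For an input probability measure μ₁ on ℝⁿ, let μ_i (i = 2, …, k) be the pushforward of μ₁ under x ↦ x/α_i, and let K̄_{μ₁} be the primary channel, the Markov kernel from ℝⁿ to 𝒴₁ given by K̄_{μ₁}(·|x₁) = ∫⋯∫ K(·|x₁, x₂, …, x_k) dμ₂(x₂)⋯dμ_k(x_k). Then the primary capacity–cost function C(β) := sup { I(μ₁, K̄_{μ₁}) : μ₁ a probability measure on ℝⁿ with ∫ b dμ₁ = β } is a nondecreasing function of β. -/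
open MeasureTheory ProbabilityTheory
open scoped ENNReal NNReal

/-- Mutual information `I(X₁;Y₁)` between the primary input `X₁` and the primary output `Y₁`
of a `k`-user memoryless interference channel `K`, when the `k` inputs are independent with
laws `μs i`.  The joint law of `(X₁, Y₁)` is the pushforward of `(Measure.pi μs) ⊗ₘ K` under
`(x, y) ↦ (x 0, y)`; this equals the mutual information `I(μs 0, K̄)` of the primary channel
`K̄(·|x₁) = ∫⋯∫ K(·|x₁, x₂, …, x_k) dμs(x₂)⋯dμs(x_k)`. -/
noncomputable def primaryMI {k : ℕ} [NeZero k] {𝒳 𝒴 : Type*} [MeasurableSpace 𝒳]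
    [MeasurableSpace 𝒴] (K : Kernel (Fin k → 𝒳) 𝒴) (μs : Fin k → Measure 𝒳) : ℝ≥0∞ :=
  klDiv (((Measure.pi μs) ⊗ₘ K).map (fun p => (p.1 0, p.2)))
    (((((Measure.pi μs) ⊗ₘ K).map (fun p => (p.1 0, p.2))).fst).prod
      ((((Measure.pi μs) ⊗ₘ K).map (fun p => (p.1 0, p.2))).snd))

/-- The primary capacity–cost function in the adaptive-interference scenario: every user `i`
transmits with the rescaled version `μᵢ = (x ↦ x / αᵢ)_* μ₁` of the primary user's input
distribution `μ₁` (with `α 0 = 1`, so that user `0` is the primary user), and the supremum of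
the primary mutual information is taken over all probability measures `μ₁` on `ℝⁿ` with cost
exactly `β`. -/
noncomputable def adaptiveCapacity {n k : ℕ} [NeZero k] {𝒴 : Type*} [MeasurableSpace 𝒴]
    (K : Kernel (Fin k → (Fin n → ℝ)) 𝒴) (α : Fin k → ℝ)
    (b : (Fin n → ℝ) → ℝ≥0) (β : ℝ≥0) : ℝ≥0∞ :=
  ⨆ μ₁ : {μ : Measure (Fin n → ℝ) //
      IsProbabilityMeasure μ ∧ ∫⁻ x, (b x : ℝ≥0∞) ∂μ = (β : ℝ≥0∞)},
    primaryMI K (fun i => (μ₁ : Measure (Fin n → ℝ)).map (fun x j => x j / α i))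


open MeasureTheory ProbabilityTheory Real
open scoped ENNReal NNReal

section Helpers
variable {Ω : Type*} [MeasurableSpace Ω] {P Q M R : Measure Ω}

lemma ofReal_max_zero (a : ℝ) : ENNReal.ofReal (max a 0) = ENNReal.ofReal a := by
  rcases le_total a 0 with h | h
  · simp [max_eq_right h, ENNReal.ofReal_of_nonpos h]
  · simp [max_eq_left h]

lemma lintegral_ofReal_neg_llr_le [SigmaFinite P] [SigmaFinite Q] (h : P ≪ Q) :
    ∫⁻ x, ENNReal.ofReal (- llr P Q x) ∂P ≤ Q Set.univ := by
  have hmeas : AEMeasurable (fun x => ENNReal.ofReal (- llr P Q x)) Q :=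
    (ENNReal.measurable_ofReal.comp (measurable_llr P Q).neg).aemeasurable
  rw [← lintegral_rnDeriv_mul h hmeas]
  calc ∫⁻ x, P.rnDeriv Q x * ENNReal.ofReal (- llr P Q x) ∂Q
      ≤ ∫⁻ _, 1 ∂Q := by
        refine lintegral_mono_ae ?_
        filter_upwards [Measure.rnDeriv_lt_top P Q] with x hx
        rcases eq_or_ne (P.rnDeriv Q x) 0 with h0 | h0
        · simp [h0]
        · have ht : 0 < (P.rnDeriv Q x).toReal := ENNReal.toReal_pos h0 hx.ne
          have hlog : - llr P Q x ≤ ((P.rnDeriv Q x).toReal)⁻¹ := by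
            have := Real.log_le_sub_one_of_pos (inv_pos.2 ht)
            rw [Real.log_inv] at this
            have : -Real.log (P.rnDeriv Q x).toReal ≤ ((P.rnDeriv Q x).toReal)⁻¹ - 1 := this
            simp only [llr]
            linarith
          calc P.rnDeriv Q x * ENNReal.ofReal (- llr P Q x)
              ≤ P.rnDeriv Q x * ENNReal.ofReal (((P.rnDeriv Q x).toReal)⁻¹) :=
                mul_le_mul_right (ENNReal.ofReal_le_ofReal hlog) _
            _ = ENNReal.ofReal ((P.rnDeriv Q x).toReal) *
                  ENNReal.ofReal (((P.rnDeriv Q x).toReal)⁻¹) := by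
                rw [ENNReal.ofReal_toReal hx.ne]
            _ = ENNReal.ofReal ((P.rnDeriv Q x).toReal * ((P.rnDeriv Q x).toReal)⁻¹) :=
                (ENNReal.ofReal_mul ht.le).symm
            _ = 1 := by rw [mul_inv_cancel₀ ht.ne']; simp
    _ = Q Set.univ := by simp

lemma integrable_max_neg_llr [IsFiniteMeasure P] [IsFiniteMeasure Q] (h : P ≪ Q) :
    Integrable (fun x => max (- llr P Q x) 0) P := by
  refine ⟨((measurable_llr P Q).neg.max measurable_const).aestronglyMeasurable, ?_⟩
  rw [hasFiniteIntegral_iff_norm]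
  have : ∀ x, ENNReal.ofReal ‖max (- llr P Q x) 0‖ = ENNReal.ofReal (- llr P Q x) := by
    intro x
    rw [Real.norm_of_nonneg (le_max_right _ _), ofReal_max_zero]
  simp_rw [this]
  exact lt_of_le_of_lt (lintegral_ofReal_neg_llr_le h) (measure_lt_top Q _)

lemma integral_max_neg_llr_le [IsFiniteMeasure P] [IsProbabilityMeasure Q] (h : P ≪ Q) :
    ∫ x, max (- llr P Q x) 0 ∂P ≤ 1 := by
  have heq := integral_eq_lintegral_of_nonneg_ae (μ := P)
    (f := fun x => max (- llr P Q x) 0)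
    (Filter.Eventually.of_forall fun x => le_max_right _ _)
    ((measurable_llr P Q).neg.max measurable_const).aestronglyMeasurable
  rw [heq]
  simp_rw [ofReal_max_zero]
  have := lintegral_ofReal_neg_llr_le h
  rw [measure_univ] at this
  calc (∫⁻ x, ENNReal.ofReal (- llr P Q x) ∂P).toReal ≤ (1 : ℝ≥0∞).toReal :=
        ENNReal.toReal_mono (by simp) this
    _ = 1 := by simp

lemma neg_one_le_integral_llr [IsFiniteMeasure P] [IsProbabilityMeasure Q] (h : P ≪ Q)
    (hint : Integrable (llr P Q) P) : -1 ≤ ∫ x, llr P Q x ∂P := by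
  have h1 : ∫ x, - max (- llr P Q x) 0 ∂P ≤ ∫ x, llr P Q x ∂P := by
    refine integral_mono_ae (integrable_max_neg_llr h).neg hint ?_
    exact Filter.Eventually.of_forall fun x => by
      simp only [neg_le]
      exact le_max_left _ _
  rw [integral_neg] at h1
  have h2 := integral_max_neg_llr_le h
  linarith



lemma integral_llr_nonneg [IsProbabilityMeasure P] [IsProbabilityMeasure Q] (h : P ≪ Q)
    (hint : Integrable (llr P Q) P) : 0 ≤ ∫ x, llr P Q x ∂P := by
  set f := P.rnDeriv Q with hf
  have hinv_le : ∫⁻ x, (f x)⁻¹ ∂P ≤ 1 := by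
    rw [← lintegral_rnDeriv_mul h (f := fun x => (f x)⁻¹) ((Measure.measurable_rnDeriv P Q).inv.aemeasurable)]
    calc ∫⁻ x, f x * (f x)⁻¹ ∂Q ≤ ∫⁻ _, 1 ∂Q := by
          refine lintegral_mono fun x => ?_
          rcases eq_or_ne (f x) 0 with h0 | h0
          · simp [h0]
          rcases eq_or_ne (f x) ∞ with ht | ht
          · simp [ht]
          · rw [ENNReal.mul_inv_cancel h0 ht]
      _ = 1 := by simp
  have hlt : ∀ᵐ x ∂P, (f x)⁻¹ < ∞ := by
    filter_upwards [Measure.rnDeriv_pos h] with x hx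
    simpa [ENNReal.inv_lt_top] using hx
  have hint_inv : Integrable (fun x => ((f x)⁻¹).toReal) P := by
    refine ⟨(Measure.measurable_rnDeriv P Q).inv.ennreal_toReal.aestronglyMeasurable, ?_⟩
    rw [hasFiniteIntegral_iff_norm]
    calc ∫⁻ x, ENNReal.ofReal ‖((f x)⁻¹).toReal‖ ∂P
        ≤ ∫⁻ x, (f x)⁻¹ ∂P := by
          refine lintegral_mono fun x => ?_
          rw [Real.norm_of_nonneg ENNReal.toReal_nonneg]
          exact ENNReal.ofReal_toReal_le
      _ ≤ 1 := hinv_le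
      _ < ∞ := by norm_num
  have hkey : ∀ᵐ x ∂P, - llr P Q x ≤ ((f x)⁻¹).toReal - 1 := by
    filter_upwards [Measure.rnDeriv_pos h, h.ae_le (Measure.rnDeriv_lt_top P Q)] with x hpos hlt'
    have ht : 0 < (f x).toReal := ENNReal.toReal_pos hpos.ne' hlt'.ne
    have hlog := Real.log_le_sub_one_of_pos (inv_pos.2 ht)
    rw [Real.log_inv] at hlog
    rw [ENNReal.toReal_inv]
    simp only [llr]
    linarith
  have h1 : ∫ x, - llr P Q x ∂P ≤ ∫ x, (((f x)⁻¹).toReal - 1) ∂P :=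
    integral_mono_ae hint.neg (hint_inv.sub (integrable_const 1)) hkey
  have h2 : ∫ x, (((f x)⁻¹).toReal - 1) ∂P = (∫⁻ x, (f x)⁻¹ ∂P).toReal - 1 := by
    rw [integral_sub hint_inv (integrable_const 1), integral_const,
      integral_toReal (f := fun x => (f x)⁻¹) ((Measure.measurable_rnDeriv P Q).inv.aemeasurable) hlt]
    simp
  have h3 : (∫⁻ x, (f x)⁻¹ ∂P).toReal ≤ 1 := by
    calc (∫⁻ x, (f x)⁻¹ ∂P).toReal ≤ (1 : ℝ≥0∞).toReal := ENNReal.toReal_mono (by simp) hinv_le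
      _ = 1 := by simp
  rw [integral_neg] at h1
  linarith

lemma llr_chain {ν₁ ν₂ ν₃ : Measure Ω} [SigmaFinite ν₁] [SigmaFinite ν₂] [SigmaFinite ν₃]
    (h12 : ν₁ ≪ ν₂) (h23 : ν₂ ≪ ν₃) :
    llr ν₁ ν₃ =ᵐ[ν₁] fun x => llr ν₁ ν₂ x + llr ν₂ ν₃ x := by
  filter_upwards [(h12.trans h23).ae_le (Measure.rnDeriv_mul_rnDeriv h12),
    Measure.rnDeriv_pos h12, h12.ae_le (Measure.rnDeriv_pos h23),
    h12.ae_le (Measure.rnDeriv_lt_top ν₁ ν₂),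
    (h12.trans h23).ae_le (Measure.rnDeriv_lt_top ν₂ ν₃)] with x hx h1 h2 h3 h4
  simp only [llr, ← hx, Pi.mul_apply, ENNReal.toReal_mul]
  rw [Real.log_mul (ENNReal.toReal_pos h1.ne' h3.ne).ne' (ENNReal.toReal_pos h2.ne' h4.ne).ne']

lemma llr_le_of_smul_le [IsFiniteMeasure P] [SigmaFinite M] {c : ℝ≥0} (hc0 : 0 < c)
    (hle : (c : ℝ≥0∞) • P ≤ M) (hPM : P ≪ M) :
    ∀ᵐ x ∂P, llr P M x ≤ Real.log (c : ℝ)⁻¹ := by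
  have h1 : ((c : ℝ≥0∞) • P).rnDeriv M ≤ᵐ[M] 1 := Measure.rnDeriv_le_one_of_le hle
  have h2 : ((c : ℝ≥0∞) • P).rnDeriv M =ᵐ[M] (c : ℝ≥0∞) • P.rnDeriv M :=
    Measure.rnDeriv_smul_left_of_ne_top P M ENNReal.coe_ne_top
  have h3 : P.rnDeriv M ≤ᵐ[M] fun _ => (c : ℝ≥0∞)⁻¹ := by
    filter_upwards [h1, h2] with x hx1 hx2
    rw [hx2] at hx1
    simp only [Pi.smul_apply, smul_eq_mul, Pi.one_apply] at hx1
    rw [ENNReal.le_inv_iff_mul_le, mul_comm]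
    exact hx1
  filter_upwards [hPM.ae_le h3, Measure.rnDeriv_pos hPM] with x hx hpos
  have hcne : ((c : ℝ≥0∞))⁻¹ ≠ ∞ := by
    simp [ENNReal.inv_ne_top, hc0.ne']
  have htr : (P.rnDeriv M x).toReal ≤ ((c : ℝ≥0∞)⁻¹).toReal := ENNReal.toReal_mono hcne hx
  have : ((c : ℝ≥0∞)⁻¹).toReal = (c : ℝ)⁻¹ := by
    simp
  rw [this] at htr
  exact Real.log_le_log (ENNReal.toReal_pos hpos.ne' (lt_of_le_of_lt hx hcne.lt_top).ne) htr

section GoldenMixture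
variable {Ω : Type*} [MeasurableSpace Ω]

variable {X Y : Type*} [MeasurableSpace X] [MeasurableSpace Y]

lemma prod_withDensity_rnDeriv {P1 Q1 : Measure X} {P2 Q2 : Measure Y}
    [IsFiniteMeasure P1] [IsFiniteMeasure P2] [SigmaFinite Q1] [SigmaFinite Q2]
    (h1 : P1 ≪ Q1) (h2 : P2 ≪ Q2) :
    P1.prod P2 = (Q1.prod Q2).withDensity
      (fun z => P1.rnDeriv Q1 z.1 * P2.rnDeriv Q2 z.2) := by
  refine Measure.prod_eq fun s t hs ht => ?_
  have hf : Measurable fun z : X × Y => P1.rnDeriv Q1 z.1 * P2.rnDeriv Q2 z.2 :=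
    ((P1.measurable_rnDeriv Q1).comp measurable_fst).mul
      ((P2.measurable_rnDeriv Q2).comp measurable_snd)
  rw [withDensity_apply _ (hs.prod ht), ← Measure.prod_restrict,
    lintegral_prod_mul ((P1.measurable_rnDeriv Q1).aemeasurable)
      ((P2.measurable_rnDeriv Q2).aemeasurable),
    Measure.setLIntegral_rnDeriv h1, Measure.setLIntegral_rnDeriv h2]

lemma klDiv_prod_marginals_le (P : Measure (X × Y)) [IsProbabilityMeasure P]
    (Q1 : Measure X) (Q2 : Measure Y) [IsProbabilityMeasure Q1] [IsProbabilityMeasure Q2] :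
    klDiv P (P.fst.prod P.snd) ≤ klDiv P (Q1.prod Q2) := by
  by_cases hcond : P ≪ Q1.prod Q2 ∧ Integrable (llr P (Q1.prod Q2)) P
  swap
  · rw [show klDiv P (Q1.prod Q2) = ⊤ from by rw [klDiv, if_neg hcond]]
    exact le_top
  obtain ⟨hPQ, hint⟩ := hcond
  have h1 : P.fst ≪ Q1 := by
    have h := hPQ.map (measurable_fst)
    exact (Measure.fst_prod (μ := Q1) (ν := Q2)) ▸ h
  have h2 : P.snd ≪ Q2 := by
    have h := hPQ.map (measurable_snd)
    exact (Measure.snd_prod (μ := Q1) (ν := Q2)) ▸ h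
  set f := P.fst.rnDeriv Q1 with hfdef
  set g := P.snd.rnDeriv Q2 with hgdef
  have hfm : Measurable f := Measure.measurable_rnDeriv _ _
  have hgm : Measurable g := Measure.measurable_rnDeriv _ _
  have hprod : P.fst.prod P.snd = (Q1.prod Q2).withDensity (fun z => f z.1 * g z.2) :=
    prod_withDensity_rnDeriv h1 h2
  -- P gives no mass to the set where f ∘ fst vanishes (or is infinite), similarly g
  have hP_f0 : P {z : X × Y | f z.1 = 0} = 0 := by
    have hmeas : MeasurableSet {x : X | f x = 0} := hfm (measurableSet_singleton 0)
    have : P {z : X × Y | f z.1 = 0} = P.fst {x | f x = 0} := by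
      rw [Measure.fst_apply hmeas]
      rfl
    rw [this, ← Measure.setLIntegral_rnDeriv h1, ← hfdef]
    rw [setLIntegral_congr_fun hmeas (fun x hx => hx)]
    simp
  have hP_g0 : P {z : X × Y | g z.2 = 0} = 0 := by
    have hmeas : MeasurableSet {y : Y | g y = 0} := hgm (measurableSet_singleton 0)
    have : P {z : X × Y | g z.2 = 0} = P.snd {y | g y = 0} := by
      rw [Measure.snd_apply hmeas]
      rfl
    rw [this, ← Measure.setLIntegral_rnDeriv h2, ← hgdef]
    rw [setLIntegral_congr_fun hmeas (fun y hy => hy)]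
    simp
  have hP_ftop : P {z : X × Y | f z.1 = ∞} = 0 := by
    have hmeas : MeasurableSet {x : X | f x = ∞} := hfm (measurableSet_singleton ∞)
    have heq : P {z : X × Y | f z.1 = ∞} = P.fst {x | f x = ∞} := by
      rw [Measure.fst_apply hmeas]; rfl
    have hq : Q1 {x : X | f x = ∞} = 0 := by
      refine measure_mono_null ?_ (ae_iff.1 (Measure.rnDeriv_lt_top P.fst Q1))
      intro x hx
      simp only [Set.mem_setOf_eq] at hx ⊢
      simp only [lt_top_iff_ne_top, not_not]
      exact hx
    rw [heq]
    exact h1 hq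
  have hP_gtop : P {z : X × Y | g z.2 = ∞} = 0 := by
    have hmeas : MeasurableSet {y : Y | g y = ∞} := hgm (measurableSet_singleton ∞)
    have heq : P {z : X × Y | g z.2 = ∞} = P.snd {y | g y = ∞} := by
      rw [Measure.snd_apply hmeas]; rfl
    have hq : Q2 {y : Y | g y = ∞} = 0 := by
      refine measure_mono_null ?_ (ae_iff.1 (Measure.rnDeriv_lt_top P.snd Q2))
      intro y hy
      simp only [Set.mem_setOf_eq] at hy ⊢
      simp only [lt_top_iff_ne_top, not_not]
      exact hy
    rw [heq]
    exact h2 hq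
  have hfgm : Measurable fun z : X × Y => f z.1 * g z.2 :=
    (hfm.comp measurable_fst).mul (hgm.comp measurable_snd)
  -- P is absolutely continuous w.r.t. the product of its marginals
  have hP12 : P ≪ P.fst.prod P.snd := by
    refine Measure.AbsolutelyContinuous.mk fun s hsm hs0 => ?_
    rw [hprod, withDensity_apply _ hsm] at hs0
    have hae : ∀ᵐ z ∂((Q1.prod Q2).restrict s), f z.1 * g z.2 = 0 :=
      (lintegral_eq_zero_iff hfgm).1 hs0
    rw [ae_restrict_iff' hsm] at hae
    have hPA : P (s ∩ {z : X × Y | f z.1 * g z.2 ≠ 0}) = 0 := by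
      refine hPQ ?_
      refine measure_mono_null ?_ (ae_iff.1 hae)
      intro z hz
      simp only [Set.mem_inter_iff, Set.mem_setOf_eq] at hz ⊢
      exact fun h => hz.2 (h hz.1)
    have hsub : s ⊆ (s ∩ {z : X × Y | f z.1 * g z.2 ≠ 0}) ∪
        ({z : X × Y | f z.1 = 0} ∪ {z : X × Y | g z.2 = 0}) := by
      intro z hz
      by_cases h : f z.1 * g z.2 = 0
      · rcases mul_eq_zero.1 h with h | h
        · exact Or.inr (Or.inl h)
        · exact Or.inr (Or.inr h)
      · exact Or.inl ⟨hz, h⟩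
    exact measure_mono_null hsub (measure_union_null hPA (measure_union_null hP_f0 hP_g0))
  have hrnProd : (P.fst.prod P.snd).rnDeriv (Q1.prod Q2) =ᵐ[Q1.prod Q2]
      fun z => f z.1 * g z.2 := by
    rw [hprod]
    exact Measure.rnDeriv_withDensity _ hfgm
  have haef0 : ∀ᵐ z ∂P, f z.1 ≠ 0 := by
    rw [ae_iff]
    convert hP_f0 using 2
    simp
  have haeg0 : ∀ᵐ z ∂P, g z.2 ≠ 0 := by
    rw [ae_iff]
    convert hP_g0 using 2
    simp
  have haeft : ∀ᵐ z ∂P, f z.1 ≠ ∞ := by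
    rw [ae_iff]
    convert hP_ftop using 2
    simp
  have haegt : ∀ᵐ z ∂P, g z.2 ≠ ∞ := by
    rw [ae_iff]
    convert hP_gtop using 2
    simp
  set u := llr P (Q1.prod Q2) with hu
  set v := llr P (P.fst.prod P.snd) with hv
  set w1 : X × Y → ℝ := fun z => llr P.fst Q1 z.1 with hw1def
  set w2 : X × Y → ℝ := fun z => llr P.snd Q2 z.2 with hw2def
  have hllr : u =ᵐ[P] fun z => v z + w1 z + w2 z := by
    filter_upwards [hPQ.ae_le (Measure.rnDeriv_mul_rnDeriv hP12), hPQ.ae_le hrnProd,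
      Measure.rnDeriv_pos hP12, hP12.ae_le (Measure.rnDeriv_lt_top P (P.fst.prod P.snd)),
      haef0, haeg0, haeft, haegt] with z hz1 hz2 hz3 hz4 hf0 hg0 hft hgt
    have hz1' : P.rnDeriv (P.fst.prod P.snd) z * (P.fst.prod P.snd).rnDeriv (Q1.prod Q2) z
        = P.rnDeriv (Q1.prod Q2) z := hz1
    simp only [hu, hv, hw1def, hw2def, llr]
    rw [← hz1', hz2, ENNReal.toReal_mul, ENNReal.toReal_mul]
    have ha : (P.rnDeriv (P.fst.prod P.snd) z).toReal ≠ 0 :=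
      (ENNReal.toReal_pos hz3.ne' hz4.ne).ne'
    have hb : (f z.1).toReal ≠ 0 := (ENNReal.toReal_pos hf0 hft).ne'
    have hc : (g z.2).toReal ≠ 0 := (ENNReal.toReal_pos hg0 hgt).ne'
    rw [Real.log_mul ha (mul_ne_zero hb hc), Real.log_mul hb hc]
    ring
  -- integrability transfers
  have hfst_eq : P.fst = P.map Prod.fst := rfl
  have hsnd_eq : P.snd = P.map Prod.snd := rfl
  have hm1 : Integrable (fun z : X × Y => max (- w1 z) 0) P := by
    have h := integrable_max_neg_llr h1
    rw [hfst_eq, integrable_map_measure (g := fun x => max (- llr (P.map Prod.fst) Q1 x) 0)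
      ((measurable_llr _ _).neg.max measurable_const).aestronglyMeasurable
      measurable_fst.aemeasurable] at h
    exact h
  have hm2 : Integrable (fun z : X × Y => max (- w2 z) 0) P := by
    have h := integrable_max_neg_llr h2
    rw [hsnd_eq, integrable_map_measure (g := fun x => max (- llr (P.map Prod.snd) Q2 x) 0)
      ((measurable_llr _ _).neg.max measurable_const).aestronglyMeasurable
      measurable_snd.aemeasurable] at h
    exact h
  have hmv : Integrable (fun z => max (- v z) 0) P := integrable_max_neg_llr hP12
  have hintv : Integrable v P := by
    refine Integrable.mono' (((hint.abs.add hm1).add hm2).add hmv)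
      (measurable_llr _ _).aestronglyMeasurable ?_
    filter_upwards [hllr] with z hz
    rw [Real.norm_eq_abs, abs_le]
    have h1' := le_max_left (- w1 z) 0
    have h2' := le_max_left (- w2 z) 0
    have h3' := le_max_left (- v z) 0
    have h4' := le_max_right (- w1 z) 0
    have h5' := le_max_right (- w2 z) 0
    have h6' := le_max_right (- v z) 0
    have habs : u z ≤ |u z| := le_abs_self _
    have habs' : -|u z| ≤ u z := neg_abs_le _
    have habs0 : (0:ℝ) ≤ |u z| := abs_nonneg _
    constructor <;> simp only [Pi.add_apply, Pi.abs_apply] <;> linarith [hz]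
  have hw12 : Integrable (fun z => w1 z + w2 z) P := by
    have heq : (fun z => w1 z + w2 z) =ᵐ[P] fun z => u z - v z := by
      filter_upwards [hllr] with z hz
      rw [hz]; ring
    exact (hint.sub hintv).congr heq.symm
  have hw1int : Integrable w1 P := by
    refine Integrable.mono' (((hint.sub hintv).abs.add hm1).add hm2)
      ((measurable_llr _ _).comp measurable_fst).aestronglyMeasurable ?_
    filter_upwards [hllr] with z hz
    rw [Real.norm_eq_abs, abs_le]
    have h1' := le_max_left (- w1 z) 0
    have h2' := le_max_left (- w2 z) 0
    have h4' := le_max_right (- w1 z) 0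
    have h5' := le_max_right (- w2 z) 0
    have hz' : u z - v z = w1 z + w2 z := by rw [hz]; ring
    have habs : u z - v z ≤ |u z - v z| := le_abs_self _
    have habs' : -|u z - v z| ≤ u z - v z := neg_abs_le _
    have habs0 : (0:ℝ) ≤ |u z - v z| := abs_nonneg _
    constructor <;> simp only [Pi.add_apply, Pi.abs_apply, Pi.sub_apply] <;> linarith
  have hw2int : Integrable w2 P := by
    have heq : w2 =ᵐ[P] fun z => (w1 z + w2 z) - w1 z := by
      filter_upwards with z
      ring
    exact (hw12.sub hw1int).congr heq.symm
  -- the marginal relative entropies are nonnegative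
  have hw1m : Integrable (llr P.fst Q1) P.fst := by
    rw [hfst_eq, integrable_map_measure (measurable_llr _ _).aestronglyMeasurable
      measurable_fst.aemeasurable]
    exact hw1int
  have hw2m : Integrable (llr P.snd Q2) P.snd := by
    rw [hsnd_eq, integrable_map_measure (measurable_llr _ _).aestronglyMeasurable
      measurable_snd.aemeasurable]
    exact hw2int
  have hi1 : 0 ≤ ∫ z, w1 z ∂P := by
    have h := integral_llr_nonneg h1 hw1m
    rwa [hfst_eq, integral_map measurable_fst.aemeasurable
      (measurable_llr _ _).aestronglyMeasurable] at h
  have hi2 : 0 ≤ ∫ z, w2 z ∂P := by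
    have h := integral_llr_nonneg h2 hw2m
    rwa [hsnd_eq, integral_map measurable_snd.aemeasurable
      (measurable_llr _ _).aestronglyMeasurable] at h
  rw [klDiv, if_pos ⟨hP12, hintv⟩, klDiv, if_pos ⟨hPQ, hint⟩]
  apply ENNReal.ofReal_le_ofReal
  have hsum : ∫ z, u z ∂P = ∫ z, v z ∂P + ∫ z, w1 z ∂P + ∫ z, w2 z ∂P := by
    have hvw : Integrable (fun z => v z + w1 z) P := hintv.add hw1int
    rw [integral_congr_ae hllr, integral_add hvw hw2int, integral_add hintv hw1int]
  show ∫ z, v z ∂P ≤ ∫ z, u z ∂P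
  linarith [hsum, hi1, hi2]


lemma klDiv_mixture_le {P R Q M : Measure Ω} [IsProbabilityMeasure P] [IsProbabilityMeasure R]
    [IsProbabilityMeasure Q] {c : ℝ≥0} (hc0 : 0 < c) (hc1 : c < 1)
    (hM : M = (c : ℝ≥0∞) • P + ((1 - c : ℝ≥0) : ℝ≥0∞) • R) :
    (c : ℝ≥0∞) * klDiv P Q ≤
      klDiv M Q + ENNReal.ofReal ((c : ℝ) * Real.log (c : ℝ)⁻¹
        + (1 - (c : ℝ)) * Real.log (1 - (c : ℝ))⁻¹ + (1 - (c : ℝ))) := by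
  set c' : ℝ≥0 := 1 - c with hc'
  have hc'0 : 0 < c' := tsub_pos_of_lt hc1
  have hc're : (c' : ℝ) = 1 - (c : ℝ) := by
    rw [hc', NNReal.coe_sub hc1.le, NNReal.coe_one]
  haveI hMprob : IsProbabilityMeasure M := by
    constructor
    rw [hM]
    simp only [Measure.add_apply, Measure.smul_apply, smul_eq_mul, measure_univ, mul_one]
    rw [← ENNReal.coe_add, hc', add_tsub_cancel_of_le hc1.le]
    simp
  by_cases hcond : M ≪ Q ∧ Integrable (llr M Q) M
  swap
  · rw [show klDiv M Q = ⊤ from by rw [klDiv, if_neg hcond]]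
    simp
  obtain ⟨hMQ, hintM⟩ := hcond
  have hPM : P ≪ M := by
    intro s hs
    rw [hM, Measure.add_apply, add_eq_zero] at hs
    have h1 := hs.1
    rw [Measure.smul_apply, smul_eq_mul, mul_eq_zero] at h1
    rcases h1 with h1 | h1
    · exact absurd h1 (by simp [hc0.ne'])
    · exact h1
  have hRM : R ≪ M := by
    intro s hs
    rw [hM, Measure.add_apply, add_eq_zero] at hs
    have h1 := hs.2
    rw [Measure.smul_apply, smul_eq_mul, mul_eq_zero] at h1
    rcases h1 with h1 | h1
    · exact absurd h1 (by simp [hc'0.ne'])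
    · exact h1
  have hlePM : (c : ℝ≥0∞) • P ≤ M := by rw [hM]; exact Measure.le_add_right le_rfl
  have hleRM : (c' : ℝ≥0∞) • R ≤ M := by rw [hM]; exact Measure.le_add_left le_rfl
  have hPleM : P ≤ ((c : ℝ≥0∞))⁻¹ • M := by
    have : P = ((c : ℝ≥0∞))⁻¹ • ((c : ℝ≥0∞) • P) := by
      rw [smul_smul, ENNReal.inv_mul_cancel (by exact_mod_cast hc0.ne') ENNReal.coe_ne_top,
        one_smul]
    rw [this]
    intro s
    simp only [Measure.smul_apply, smul_eq_mul]
    exact mul_le_mul_right (hlePM s) _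
  have hRleM : R ≤ ((c' : ℝ≥0∞))⁻¹ • M := by
    have : R = ((c' : ℝ≥0∞))⁻¹ • ((c' : ℝ≥0∞) • R) := by
      rw [smul_smul, ENNReal.inv_mul_cancel (by exact_mod_cast hc'0.ne') ENNReal.coe_ne_top,
        one_smul]
    rw [this]
    intro s
    simp only [Measure.smul_apply, smul_eq_mul]
    exact mul_le_mul_right (hleRM s) _
  have hintMP : Integrable (llr M Q) P :=
    (hintM.smul_measure (ENNReal.inv_ne_top.2 (by exact_mod_cast hc0.ne'))).mono_measure hPleM
  have hintMR : Integrable (llr M Q) R :=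
    (hintM.smul_measure (ENNReal.inv_ne_top.2 (by exact_mod_cast hc'0.ne'))).mono_measure hRleM
  have hbP : ∀ᵐ x ∂P, llr P M x ≤ Real.log (c : ℝ)⁻¹ := llr_le_of_smul_le hc0 hlePM hPM
  have hbR : ∀ᵐ x ∂ R, llr R M x ≤ Real.log (c' : ℝ)⁻¹ := llr_le_of_smul_le hc'0 hleRM hRM
  have hint_of_bound : ∀ (ρ : Measure Ω), IsProbabilityMeasure ρ → ∀ (K : ℝ), ρ ≪ M →
      (∀ᵐ x ∂ρ, llr ρ M x ≤ K) → Integrable (llr ρ M) ρ := by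
    intro ρ hρ K hρM hK
    haveI := hρ
    refine Integrable.mono'
      ((integrable_const (max K 0)).add (integrable_max_neg_llr hρM))
      (measurable_llr _ _).aestronglyMeasurable ?_
    filter_upwards [hK] with x hx
    rw [Real.norm_eq_abs, abs_le]
    constructor
    · have h1 := le_max_left (- llr ρ M x) 0
      have h2 := le_max_right K 0
      simp only [Pi.add_apply]
      linarith
    · have h1 := le_max_left K 0
      have h2 := le_max_right (- llr ρ M x) 0
      simp only [Pi.add_apply]
      linarith
  have hintPM : Integrable (llr P M) P := hint_of_bound P inferInstance _ hPM hbP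
  have hintRM : Integrable (llr R M) R := hint_of_bound R inferInstance _ hRM hbR
  have hchainP : llr P Q =ᵐ[P] fun x => llr P M x + llr M Q x := llr_chain hPM hMQ
  have hchainR : llr R Q =ᵐ[R] fun x => llr R M x + llr M Q x := llr_chain hRM hMQ
  have hintPQ : Integrable (llr P Q) P := (hintPM.add hintMP).congr hchainP.symm
  have hintRQ : Integrable (llr R Q) R := (hintRM.add hintMR).congr hchainR.symm
  have hPQ : P ≪ Q := hPM.trans hMQ
  have hRQ : R ≪ Q := hRM.trans hMQ
  rw [klDiv, if_pos ⟨hPQ, hintPQ⟩, klDiv, if_pos ⟨hMQ, hintM⟩]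
  have e1 : ∫ x, llr P Q x ∂P = ∫ x, llr P M x ∂P + ∫ x, llr M Q x ∂P := by
    rw [integral_congr_ae hchainP, integral_add hintPM hintMP]
  have e2 : ∫ x, llr R Q x ∂ R = ∫ x, llr R M x ∂ R + ∫ x, llr M Q x ∂ R := by
    rw [integral_congr_ae hchainR, integral_add hintRM hintMR]
  have a1 : ∫ x, llr P M x ∂P ≤ Real.log (c : ℝ)⁻¹ := by
    have := integral_mono_ae hintPM (integrable_const _) hbP
    simpa using this
  have a5 : ∫ x, llr R M x ∂ R ≤ Real.log (c' : ℝ)⁻¹ := by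
    have := integral_mono_ae hintRM (integrable_const _) hbR
    simpa using this
  have a4 : -1 ≤ ∫ x, llr R Q x ∂ R := neg_one_le_integral_llr hRQ hintRQ
  have a2 : ∫ x, llr M Q x ∂M
      = (c : ℝ) * ∫ x, llr M Q x ∂P + (c' : ℝ) * ∫ x, llr M Q x ∂ R := by
    have a2' : ∫ x, llr M Q x ∂M
        = ∫ x, llr M Q x ∂((c : ℝ≥0∞) • P + ((c' : ℝ≥0) : ℝ≥0∞) • R) := by rw [← hM]
    rw [a2', integral_add_measure (hintMP.smul_measure ENNReal.coe_ne_top)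
      (hintMR.smul_measure ENNReal.coe_ne_top), integral_smul_measure, integral_smul_measure]
    simp [smul_eq_mul]
  have goal' : (c : ℝ) * ∫ x, llr P Q x ∂P ≤ ∫ x, llr M Q x ∂M +
      ((c : ℝ) * Real.log (c : ℝ)⁻¹ + (1 - (c : ℝ)) * Real.log (1 - (c : ℝ))⁻¹
        + (1 - (c : ℝ))) := by
    rw [← hc're, e1, a2]
    have hb1 : (c : ℝ) * ∫ x, llr P M x ∂P ≤ (c : ℝ) * Real.log (c : ℝ)⁻¹ :=
      mul_le_mul_of_nonneg_left a1 c.coe_nonneg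
    have hbR2 : -(1 : ℝ) - Real.log (c' : ℝ)⁻¹ ≤ ∫ x, llr M Q x ∂ R := by
      have : ∫ x, llr M Q x ∂ R = ∫ x, llr R Q x ∂ R - ∫ x, llr R M x ∂ R := by
        rw [e2]; ring
      rw [this]
      linarith
    have hbR3 : (c' : ℝ) * (-(1 : ℝ) - Real.log (c' : ℝ)⁻¹) ≤ (c' : ℝ) * ∫ x, llr M Q x ∂ R :=
      mul_le_mul_of_nonneg_left hbR2 c'.coe_nonneg
    nlinarith [c'.coe_nonneg]
  calc (c : ℝ≥0∞) * ENNReal.ofReal (∫ x, llr P Q x ∂P)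
      = ENNReal.ofReal ((c : ℝ) * ∫ x, llr P Q x ∂P) := by
        rw [ENNReal.ofReal_mul c.coe_nonneg, ENNReal.ofReal_coe_nnreal]
    _ ≤ ENNReal.ofReal (∫ x, llr M Q x ∂M +
        ((c : ℝ) * Real.log (c : ℝ)⁻¹ + (1 - (c : ℝ)) * Real.log (1 - (c : ℝ))⁻¹
          + (1 - (c : ℝ)))) := ENNReal.ofReal_le_ofReal goal'
    _ ≤ _ := ENNReal.ofReal_add_le

end GoldenMixture

instance isFiniteMeasure_coe_smul_add {𝒳 : Type*} [MeasurableSpace 𝒳] (μ ρ : Measure 𝒳)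
    [IsFiniteMeasure μ] [IsFiniteMeasure ρ] (a b : ℝ≥0) :
    IsFiniteMeasure ((a : ℝ≥0∞) • μ + (b : ℝ≥0∞) • ρ) := by
  constructor
  rw [Measure.add_apply, Measure.smul_apply, Measure.smul_apply, smul_eq_mul, smul_eq_mul]
  exact ENNReal.add_lt_top.2 ⟨ENNReal.mul_lt_top ENNReal.coe_lt_top (measure_lt_top μ _),
    ENNReal.mul_lt_top ENNReal.coe_lt_top (measure_lt_top ρ _)⟩

instance isProbabilityMeasure_ite {𝒳 : Type*} [MeasurableSpace 𝒳] {k : ℕ}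
    (ν δ : Fin k → Measure 𝒳) [∀ i, IsProbabilityMeasure (ν i)]
    [∀ i, IsProbabilityMeasure (δ i)] (t : Finset (Fin k)) (i : Fin k) :
    IsProbabilityMeasure (if i ∈ t then δ i else ν i) := by
  split <;> infer_instance

lemma pi_mixture_eq {k : ℕ} {𝒳 : Type*} [MeasurableSpace 𝒳]
    (ν δ : Fin k → Measure 𝒳) [∀ i, IsProbabilityMeasure (ν i)]
    [∀ i, IsProbabilityMeasure (δ i)] (a b : ℝ≥0) :
    Measure.pi (fun i => (a : ℝ≥0∞) • ν i + (b : ℝ≥0∞) • δ i)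
      = ∑ t : Finset (Fin k), ((b : ℝ≥0∞) ^ t.card * (a : ℝ≥0∞) ^ (k - t.card)) •
          Measure.pi (fun i => if i ∈ t then δ i else ν i) := by
  refine Measure.pi_eq fun s hs => ?_
  rw [Measure.finset_sum_apply]
  have hterm : ∀ t : Finset (Fin k),
      (((b : ℝ≥0∞) ^ t.card * (a : ℝ≥0∞) ^ (k - t.card)) •
        Measure.pi (fun i => if i ∈ t then δ i else ν i)) (Set.pi Set.univ s)
      = (∏ i ∈ t, (b : ℝ≥0∞) * δ i (s i)) * ∏ i ∈ Finset.univ \ t, (a : ℝ≥0∞) * ν i (s i) := by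
    intro t
    rw [Measure.smul_apply, Measure.pi_pi, smul_eq_mul]
    have hsplit : ∏ i, (fun i => if i ∈ t then δ i else ν i) i (s i)
        = (∏ i ∈ t, δ i (s i)) * ∏ i ∈ tᶜ, ν i (s i) := by
      rw [← Finset.prod_mul_prod_compl t]
      congr 1
      · exact Finset.prod_congr rfl fun i hi => by simp [hi]
      · refine Finset.prod_congr rfl fun i hi => by
          simp only [Finset.mem_compl] at hi
          simp [hi]
    rw [hsplit, Finset.prod_mul_distrib, Finset.prod_const, Finset.prod_mul_distrib,
      Finset.prod_const, ← Finset.compl_eq_univ_sdiff, Finset.card_compl,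
      Fintype.card_fin]
    ring
  calc ∑ t : Finset (Fin k), (((b : ℝ≥0∞) ^ t.card * (a : ℝ≥0∞) ^ (k - t.card)) •
        Measure.pi (fun i => if i ∈ t then δ i else ν i)) (Set.pi Set.univ s)
      = ∑ t ∈ (Finset.univ : Finset (Fin k)).powerset,
          (∏ i ∈ t, (b : ℝ≥0∞) * δ i (s i)) * ∏ i ∈ Finset.univ \ t, (a : ℝ≥0∞) * ν i (s i) := by
        rw [Finset.powerset_univ]
        exact Finset.sum_congr rfl fun t _ => hterm t
    _ = ∏ i, ((b : ℝ≥0∞) * δ i (s i) + (a : ℝ≥0∞) * ν i (s i)) :=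
        (Finset.prod_add _ _ _).symm
    _ = ∏ i, ((a : ℝ≥0∞) • ν i + (b : ℝ≥0∞) • δ i) (s i) := by
        refine Finset.prod_congr rfl fun i _ => ?_
        rw [Measure.add_apply, Measure.smul_apply, Measure.smul_apply, smul_eq_mul, smul_eq_mul,
          add_comm]

lemma pi_mixture_le {k : ℕ} {𝒳 : Type*} [MeasurableSpace 𝒳]
    (ν δ : Fin k → Measure 𝒳) [∀ i, IsProbabilityMeasure (ν i)]
    [∀ i, IsProbabilityMeasure (δ i)] (a b : ℝ≥0) :
    ((a : ℝ≥0∞) ^ k) • Measure.pi ν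
      ≤ Measure.pi (fun i => (a : ℝ≥0∞) • ν i + (b : ℝ≥0∞) • δ i) := by
  rw [pi_mixture_eq ν δ a b,
    ← Finset.add_sum_erase _ _ (Finset.mem_univ (∅ : Finset (Fin k)))]
  refine Measure.le_add_right (le_of_eq ?_)
  simp

end Helpers


section Assembly

instance isFiniteMeasure_coe_smul {𝒳 : Type*} [MeasurableSpace 𝒳] (a : ℝ≥0) (μ : Measure 𝒳)
    [IsFiniteMeasure μ] : IsFiniteMeasure ((a : ℝ≥0∞) • μ) := by
  constructor
  rw [Measure.smul_apply, smul_eq_mul]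
  exact ENNReal.mul_lt_top ENNReal.coe_lt_top (measure_lt_top μ _)

lemma compProd_mono_left {𝒳 𝒴 : Type*} [MeasurableSpace 𝒳] [MeasurableSpace 𝒴]
    {μ ν : Measure 𝒳} [SFinite μ] [SFinite ν] (κ : Kernel 𝒳 𝒴) [IsSFiniteKernel κ]
    (h : μ ≤ ν) : μ ⊗ₘ κ ≤ ν ⊗ₘ κ := by
  refine Measure.le_iff.2 fun s hs => ?_
  rw [Measure.compProd_apply hs, Measure.compProd_apply hs]
  exact lintegral_mono' h le_rfl

lemma mul_log_inv_le_two_sqrt {x : ℝ} (hx0 : 0 < x) : x * Real.log x⁻¹ ≤ 2 * Real.sqrt x := by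
  have hs : 0 < Real.sqrt x := Real.sqrt_pos.2 hx0
  have h1 : Real.log x⁻¹ = 2 * Real.log (Real.sqrt x)⁻¹ := by
    rw [Real.log_inv, Real.log_inv, Real.log_sqrt hx0.le]; ring
  have h2 : Real.log (Real.sqrt x)⁻¹ ≤ (Real.sqrt x)⁻¹ - 1 :=
    Real.log_le_sub_one_of_pos (inv_pos.2 hs)
  have hxx : x * (Real.sqrt x)⁻¹ = Real.sqrt x := by
    have := Real.mul_self_sqrt hx0.le; field_simp; nlinarith [this]
  calc x * Real.log x⁻¹ = 2 * (x * Real.log (Real.sqrt x)⁻¹) := by rw [h1]; ring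
    _ ≤ 2 * (x * ((Real.sqrt x)⁻¹ - 1)) := by
        have := mul_le_mul_of_nonneg_left h2 hx0.le
        linarith
    _ = 2 * Real.sqrt x - 2 * x := by rw [mul_sub, hxx]; ring
    _ ≤ 2 * Real.sqrt x := by linarith

/-- The vanishing penalty function. -/
noncomputable def auxPen (c : ℝ≥0) : ℝ :=
  (c : ℝ) * Real.log ((c : ℝ))⁻¹ + 2 * Real.sqrt (1 - (c : ℝ)) + (1 - (c : ℝ))

end Assembly

/-- Theorem 2 (adaptive interference distributions): for a `k`-user memoryless interference
channel from `(ℝⁿ)^k` to a standard Borel output space, positive scaling constants `α` with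
`α 0 = 1`, and an unbounded cost function `b` on `ℝⁿ`, the primary capacity–cost function
`C(β) = sup { I(μ₁, K̄_{μ₁}) : μ₁ probability measure on ℝⁿ, ∫ b dμ₁ = β }` is nondecreasing. -/
theorem adaptive_interference_capacity_mono
    {n k : ℕ} [NeZero k] {𝒴 : Type*} [MeasurableSpace 𝒴] [StandardBorelSpace 𝒴]
    (K : Kernel (Fin k → (Fin n → ℝ)) 𝒴) [IsMarkovKernel K]
    (α : Fin k → ℝ) (hα : ∀ i, 0 < α i) (hα0 : α 0 = 1)
    (b : (Fin n → ℝ) → ℝ≥0) (hb : Measurable b)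
    (hb_unbounded : ∀ b₀ : ℝ≥0, ∃ x : Fin n → ℝ, b x = b₀)
    (β β' : ℝ≥0) (h : β' ≤ β) :
    adaptiveCapacity K α b β' ≤ adaptiveCapacity K α b β := by
  classical
  refine iSup_le fun μ' => ?_
  obtain ⟨μ, hμprob, hμcost⟩ := μ'
  haveI := hμprob
  set T : Fin k → (Fin n → ℝ) → (Fin n → ℝ) := fun i x j => x j / α i with hT
  have hTmeas : ∀ i, Measurable (T i) :=
    fun i => measurable_pi_lambda _ fun j => (measurable_pi_apply j).div_const _
  set ν : Fin k → Measure (Fin n → ℝ) := fun i => μ.map (T i) with hν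
  haveI hνprob : ∀ i, IsProbabilityMeasure (ν i) :=
    fun i => Measure.isProbabilityMeasure_map (hTmeas i).aemeasurable
  set projPair : (Fin k → (Fin n → ℝ)) × 𝒴 → (Fin n → ℝ) × 𝒴 := fun q => (q.1 0, q.2) with hprojPairdef
  have hprojPair : Measurable projPair := ((measurable_pi_apply 0).comp measurable_fst).prodMk measurable_snd
  set P0 : Measure ((Fin n → ℝ) × 𝒴) := ((Measure.pi ν) ⊗ₘ K).map projPair with hP0
  haveI : IsProbabilityMeasure P0 := Measure.isProbabilityMeasure_map hprojPair.aemeasurable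
  show klDiv P0 (P0.fst.prod P0.snd) ≤ adaptiveCapacity K α b β
  set C := adaptiveCapacity K α b β with hC
  set I := klDiv P0 (P0.fst.prod P0.snd) with hI
  have key : ∀ p : ℝ≥0, 0 < p → p < 1 →
      ((((1 - p : ℝ≥0) ^ k : ℝ≥0)) : ℝ≥0∞) * I ≤ C + ENNReal.ofReal (auxPen ((1 - p) ^ k)) := by
    intro p hp0 hp1
    set q : ℝ≥0 := 1 - p with hq
    have hqp : q + p = 1 := tsub_add_cancel_of_le hp1.le
    have hq0 : 0 < q := tsub_pos_of_lt hp1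
    set c : ℝ≥0 := q ^ k with hc
    have hc0 : 0 < c := pow_pos hq0 k
    have hc1 : c < 1 := pow_lt_one₀ zero_le (tsub_lt_self one_pos hp0) (NeZero.ne k)
    set bp : ℝ≥0 := (β - q * β') * p⁻¹ with hbp
    obtain ⟨x₀, hx₀⟩ := hb_unbounded bp
    set μp : Measure (Fin n → ℝ) := (q : ℝ≥0∞) • μ + (p : ℝ≥0∞) • Measure.dirac x₀ with hμp
    haveI hμpprob : IsProbabilityMeasure μp := by
      constructor
      rw [hμp, Measure.add_apply, Measure.smul_apply, Measure.smul_apply, smul_eq_mul,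
        smul_eq_mul, measure_univ, measure_univ, mul_one, mul_one, ← ENNReal.coe_add, hqp,
        ENNReal.coe_one]
    have hcost : ∫⁻ x, (b x : ℝ≥0∞) ∂μp = (β : ℝ≥0∞) := by
      rw [hμp, lintegral_add_measure, lintegral_smul_measure, lintegral_smul_measure,
        lintegral_dirac' x₀ (show Measurable fun a => ((b a : ℝ≥0∞)) from
          measurable_coe_nnreal_ennreal.comp hb), hμcost, hx₀]
      rw [smul_eq_mul, smul_eq_mul, ← ENNReal.coe_mul, ← ENNReal.coe_mul, ← ENNReal.coe_add, ENNReal.coe_inj]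
      have hle1 : q * β' ≤ β := by
        calc q * β' ≤ 1 * β' := mul_le_mul_of_nonneg_right (by
              rw [hq]; exact tsub_le_self) zero_le
          _ = β' := one_mul _
          _ ≤ β := h
      have hpbp : p * bp = β - q * β' := by
        rw [hbp, mul_comm p, mul_assoc, inv_mul_cancel₀ hp0.ne', mul_one]
      rw [hpbp, add_tsub_cancel_of_le hle1]
    set δi : Fin k → Measure (Fin n → ℝ) := fun i => Measure.dirac (T i x₀) with hδi
    haveI : ∀ i, IsProbabilityMeasure (δi i) := fun i => by rw [hδi]; infer_instance
    have hmap : (fun i => (q : ℝ≥0∞) • ν i + (p : ℝ≥0∞) • δi i)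
        = fun i => μp.map (T i) := by
      funext i
      rw [hμp, Measure.map_add _ _ (hTmeas i), Measure.map_smul, Measure.map_smul,
        Measure.map_dirac' (hTmeas i)]
    haveI : ∀ i, IsProbabilityMeasure (μp.map (T i)) :=
      fun i => Measure.isProbabilityMeasure_map (hTmeas i).aemeasurable
    have hpile : ((c : ℝ≥0) : ℝ≥0∞) • Measure.pi ν ≤ Measure.pi (fun i => μp.map (T i)) := by
      have h2 := pi_mixture_le ν δi q p
      rw [hmap] at h2
      rw [hc, ENNReal.coe_pow]
      exact h2
    set Pp : Measure ((Fin n → ℝ) × 𝒴) :=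
      ((Measure.pi fun i => μp.map (T i)) ⊗ₘ K).map projPair with hPp
    haveI : IsProbabilityMeasure Pp := Measure.isProbabilityMeasure_map hprojPair.aemeasurable
    have hlePp : (c : ℝ≥0∞) • P0 ≤ Pp := by
      have hstep : (((c : ℝ≥0∞) • Measure.pi ν) ⊗ₘ K) ≤
          ((Measure.pi fun i => μp.map (T i)) ⊗ₘ K) := compProd_mono_left K hpile
      calc (c : ℝ≥0∞) • P0 = (((c : ℝ≥0∞) • (Measure.pi ν ⊗ₘ K)).map projPair) := by
            rw [hP0, Measure.map_smul]
        _ = ((((c : ℝ≥0∞) • Measure.pi ν) ⊗ₘ K).map projPair) := by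
            rw [Measure.compProd_smul_left]
        _ ≤ Pp := Measure.map_mono hstep hprojPair
    set c' : ℝ≥0 := 1 - c with hc'
    have hc'0 : 0 < c' := tsub_pos_of_lt hc1
    set Rm : Measure ((Fin n → ℝ) × 𝒴) := ((c' : ℝ≥0∞))⁻¹ • (Pp - (c : ℝ≥0∞) • P0) with hRm
    have hsub : Pp - (c : ℝ≥0∞) • P0 + (c : ℝ≥0∞) • P0 = Pp :=
      Measure.sub_add_cancel_of_le hlePp
    have hRmass : (Pp - (c : ℝ≥0∞) • P0) Set.univ = ((c' : ℝ≥0) : ℝ≥0∞) := by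
      rw [Measure.sub_apply MeasurableSet.univ hlePp, Measure.smul_apply, smul_eq_mul,
        measure_univ, measure_univ, mul_one, hc', ENNReal.coe_sub, ENNReal.coe_one]
    haveI hRprob : IsProbabilityMeasure Rm := by
      constructor
      rw [hRm, Measure.smul_apply, hRmass, smul_eq_mul,
        ENNReal.inv_mul_cancel (by exact_mod_cast hc'0.ne') ENNReal.coe_ne_top]
    have hM : Pp = (c : ℝ≥0∞) • P0 + ((1 - c : ℝ≥0) : ℝ≥0∞) • Rm := by
      rw [hRm, smul_smul, show ((1 - c : ℝ≥0) : ℝ≥0∞) = (c' : ℝ≥0∞) from by rw [hc'],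
        ENNReal.mul_inv_cancel (by exact_mod_cast hc'0.ne') ENNReal.coe_ne_top, one_smul,
        add_comm]
      exact hsub.symm
    have hB := klDiv_mixture_le (P := P0) (R := Rm) (Q := Pp.fst.prod Pp.snd) (M := Pp)
      hc0 hc1 hM
    have hA : klDiv P0 (P0.fst.prod P0.snd) ≤ klDiv P0 (Pp.fst.prod Pp.snd) :=
      klDiv_prod_marginals_le P0 Pp.fst Pp.snd
    have hsup : klDiv Pp (Pp.fst.prod Pp.snd) ≤ C := by
      have hfeas : IsProbabilityMeasure μp ∧
          ∫⁻ x, (b x : ℝ≥0∞) ∂μp = ((β : ℝ≥0) : ℝ≥0∞) := ⟨hμpprob, hcost⟩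
      have hle := le_iSup (fun (m : {m : Measure (Fin n → ℝ) //
          IsProbabilityMeasure m ∧ ∫⁻ x, (b x : ℝ≥0∞) ∂m = ((β : ℝ≥0) : ℝ≥0∞)}) =>
        primaryMI K fun i => (m : Measure (Fin n → ℝ)).map (fun x j => x j / α i))
        ⟨μp, hfeas⟩
      exact hle
    have hpen : ENNReal.ofReal ((c : ℝ) * Real.log (c : ℝ)⁻¹
        + (1 - (c : ℝ)) * Real.log (1 - (c : ℝ))⁻¹ + (1 - (c : ℝ)))
        ≤ ENNReal.ofReal (auxPen c) := by
      refine ENNReal.ofReal_le_ofReal ?_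
      rw [auxPen]
      have hx0 : (0 : ℝ) < 1 - (c : ℝ) := by
        have : (c : ℝ) < 1 := by exact_mod_cast hc1
        linarith
      have := mul_log_inv_le_two_sqrt hx0
      linarith
    calc ((c : ℝ≥0) : ℝ≥0∞) * I
        ≤ ((c : ℝ≥0) : ℝ≥0∞) * klDiv P0 (Pp.fst.prod Pp.snd) := mul_le_mul_right hA _
      _ ≤ klDiv Pp (Pp.fst.prod Pp.snd) + ENNReal.ofReal ((c : ℝ) * Real.log (c : ℝ)⁻¹
            + (1 - (c : ℝ)) * Real.log (1 - (c : ℝ))⁻¹ + (1 - (c : ℝ))) := hB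
      _ ≤ C + ENNReal.ofReal (auxPen c) := add_le_add hsup hpen
  -- now take the limit p → 0 along the sequence p m = (m + 2)⁻¹
  set pseq : ℕ → ℝ≥0 := fun m => ((m : ℝ≥0) + 2)⁻¹ with hpseq
  have hp0 : ∀ m, 0 < pseq m := fun m => by
    rw [hpseq]
    positivity
  have hp1 : ∀ m, pseq m < 1 := fun m => by
    rw [hpseq]
    rw [← NNReal.coe_lt_coe]
    push_cast
    rw [inv_lt_one_iff₀]
    right
    linarith [Nat.cast_nonneg (α := ℝ) m]
  set cseq : ℕ → ℝ≥0 := fun m => (1 - pseq m) ^ k with hcseq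
  have hkey : ∀ m, ((cseq m : ℝ≥0∞)) * I ≤ C + ENNReal.ofReal (auxPen (cseq m)) :=
    fun m => key (pseq m) (hp0 m) (hp1 m)
  have hctend : Filter.Tendsto (fun m => ((cseq m : ℝ) : ℝ)) Filter.atTop (nhds 1) := by
    have hptend : Filter.Tendsto (fun m => ((pseq m : ℝ))) Filter.atTop (nhds 0) := by
      have : (fun m : ℕ => ((pseq m : ℝ))) = fun m : ℕ => ((m : ℝ) + 2)⁻¹ := by
        funext m
        rw [hpseq]
        push_cast
        rfl
      rw [this]
      exact tendsto_inv_atTop_zero.comp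
        (Filter.tendsto_atTop_add_const_right _ 2 tendsto_natCast_atTop_atTop)
    have h1 : (fun m => ((cseq m : ℝ))) = fun m => (1 - (pseq m : ℝ)) ^ k := by
      funext m
      rw [hcseq]
      push_cast [NNReal.coe_sub (hp1 m).le]
      rfl
    rw [h1]
    have := ((tendsto_const_nhds (x := (1 : ℝ))).sub hptend).pow k
    simpa using this
  rcases eq_or_ne I ⊤ with hItop | hItop
  · -- if I = ⊤ then C must be ⊤
    have h0 := hkey 0
    rw [hItop, ENNReal.mul_top (by
      simp only [ne_eq, ENNReal.coe_eq_zero]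
      exact (pow_pos (tsub_pos_of_lt (hp1 0)) k).ne')] at h0
    have : C = ⊤ := by
      by_contra hCne
      exact (ENNReal.add_ne_top.2 ⟨hCne, ENNReal.ofReal_ne_top⟩) (top_le_iff.1 h0)
    rw [hItop, this]
  · -- I finite: pass to the limit
    have hL : Filter.Tendsto (fun m => ((cseq m : ℝ≥0∞)) * I) Filter.atTop (nhds I) := by
      have hcoe : Filter.Tendsto (fun m => ((cseq m : ℝ≥0∞))) Filter.atTop (nhds 1) := by
        rw [show ((1 : ℝ≥0∞)) = ((1 : ℝ≥0) : ℝ≥0∞) from rfl]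
        rw [ENNReal.tendsto_coe]
        rw [← NNReal.tendsto_coe]
        exact hctend
      have := ENNReal.Tendsto.mul_const (b := I) hcoe (Or.inr hItop)
      simpa using this
    have hR : Filter.Tendsto (fun m => C + ENNReal.ofReal (auxPen (cseq m)))
        Filter.atTop (nhds C) := by
      have hpen0 : Filter.Tendsto (fun m => auxPen (cseq m)) Filter.atTop (nhds 0) := by
        have hlog : Filter.Tendsto (fun m => Real.log ((cseq m : ℝ))⁻¹) Filter.atTop
            (nhds 0) := by
          have h1 : Filter.Tendsto (fun m => Real.log ((cseq m : ℝ))) Filter.atTop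
              (nhds 0) := by
            have := (Real.continuousAt_log one_ne_zero).tendsto.comp hctend
            simpa [Function.comp_def] using this
          simpa [Real.log_inv] using h1.neg
        have hsqrt : Filter.Tendsto (fun m => Real.sqrt (1 - (cseq m : ℝ))) Filter.atTop
            (nhds 0) := by
          have h1 : Filter.Tendsto (fun m => 1 - ((cseq m : ℝ))) Filter.atTop (nhds 0) := by
            have := (tendsto_const_nhds (x := (1 : ℝ))).sub hctend
            simpa using this
          have := (Real.continuous_sqrt.tendsto 0).comp h1
          simpa [Function.comp_def] using this
        have h1 : Filter.Tendsto (fun m => 1 - ((cseq m : ℝ))) Filter.atTop (nhds 0) := by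
          have := (tendsto_const_nhds (x := (1 : ℝ))).sub hctend
          simpa using this
        have := ((hctend.mul hlog).add ((tendsto_const_nhds (x := (2:ℝ))).mul hsqrt)).add h1
        simp only [auxPen]
        simpa using this
      have hofReal : Filter.Tendsto (fun m => ENNReal.ofReal (auxPen (cseq m)))
          Filter.atTop (nhds 0) := by
        have := ENNReal.tendsto_ofReal hpen0
        simpa using this
      have := hofReal.const_add C
      simpa using this
    exact le_of_tendsto_of_tendsto' hL hR hkey
end

section
/- (Theorem 3, abstract form) Let k ≥ 1 and let 𝒞 be a map assigning to each cost vector β ∈ [0, ∞)^k a set 𝒞(β) ⊆ [0, ∞)^k of rate vectors such that: (i) each 𝒞(β) is a closed subset of ℝ^k; (ii) the zero rate vector 0 belongs to 𝒞(β) for every β; and (iii) the time-sharing property holds: for all β′, β″ ∈ [0, ∞)^k, all R′ ∈ 𝒞(β′), R″ ∈ 𝒞(β″), and all ε ∈ [0, 1], the vector (1 − ε)R′ + εR″ belongs to 𝒞((1 − ε)β′ + εβ″). Then 𝒞 is monotone: for all β, β′ ∈ [0, ∞)^k with β_i ≥ β_i′ for every i = 1, …, k, one has 𝒞(β) ⊇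 𝒞(β′). -/
/-- Theorem 3 (abstract form): let `𝒞` assign to each cost vector `β ∈ [0, ∞)^k` a set
`𝒞(β) ⊆ [0, ∞)^k` of rate vectors such that (i) each `𝒞(β)` is closed, (ii) the zero rate
vector belongs to every `𝒞(β)`, and (iii) the time-sharing property holds.  Then `𝒞` is
monotone: componentwise `β ≥ β'` implies `𝒞(β) ⊇ 𝒞(β')`. -/
theorem capacity_region_mono
    {k : ℕ} (hk : 1 ≤ k)
    (𝒞 : (Fin k → ℝ) → Set (Fin k → ℝ))
    (hrange : ∀ β : Fin k → ℝ, (∀ i, 0 ≤ β i) → 𝒞 β ⊆ {R | ∀ i, 0 ≤ R i})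
    (hclosed : ∀ β : Fin k → ℝ, (∀ i, 0 ≤ β i) → IsClosed (𝒞 β))
    (hzero : ∀ β : Fin k → ℝ, (∀ i, 0 ≤ β i) → (0 : Fin k → ℝ) ∈ 𝒞 β)
    (hts : ∀ β' β'' : Fin k → ℝ, (∀ i, 0 ≤ β' i) → (∀ i, 0 ≤ β'' i) →
      ∀ R' ∈ 𝒞 β', ∀ R'' ∈ 𝒞 β'', ∀ ε : ℝ, 0 ≤ ε → ε ≤ 1 →
        (1 - ε) • R' + ε • R'' ∈ 𝒞 ((1 - ε) • β' + ε • β''))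
    (β β' : Fin k → ℝ) (hβ'0 : ∀ i, 0 ≤ β' i) (hββ' : ∀ i, β' i ≤ β i) :
    𝒞 β' ⊆ 𝒞 β := by
  intro R hR
  have hβ0 : ∀ i, 0 ≤ β i := fun i => le_trans (hβ'0 i) (hββ' i)
  -- for each n, (1 - 1/(n+1)) • R ∈ 𝒞 β
  have key : ∀ n : ℕ, (1 - (1 : ℝ)/(n+1)) • R ∈ 𝒞 β := by
    intro n
    set ε : ℝ := 1/(n+1) with hε
    have hεpos : (0:ℝ) < ε := by positivity
    have hεle : ε ≤ 1 := by
      rw [hε, div_le_one (by positivity)]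
      linarith [Nat.cast_nonneg (α := ℝ) n]
    set β'' : Fin k → ℝ := fun i => β' i + (n+1) * (β i - β' i) with hβ''
    have hβ''0 : ∀ i, 0 ≤ β'' i := by
      intro i
      have h1 := hβ'0 i
      have h2 : (0:ℝ) ≤ (n+1) * (β i - β' i) := by
        apply mul_nonneg (by positivity)
        linarith [hββ' i]
      simp only [hβ'']
      linarith
    have hcomb : (1 - ε) • β' + ε • β'' = β := by
      funext i
      simp only [Pi.add_apply, Pi.smul_apply, smul_eq_mul, hβ'']
      have : ε * (n+1) = 1 := by
        rw [hε]; field_simp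
      linear_combination (β i - β' i) * this
    have := hts β' β'' hβ'0 hβ''0 R hR 0 (hzero β'' hβ''0) ε hεpos.le hεle
    rw [hcomb] at this
    simpa using this
  -- take the limit n → ∞
  have hlim : Filter.Tendsto (fun n : ℕ => (1 - (1 : ℝ)/(n+1)) • R)
      Filter.atTop (nhds R) := by
    have h1 : Filter.Tendsto (fun n : ℕ => 1 - (1 : ℝ)/(n+1))
        Filter.atTop (nhds 1) := by
      have : Filter.Tendsto (fun n : ℕ => 1 / ((n : ℝ) + 1)) Filter.atTop (nhds 0) :=
        tendsto_one_div_add_atTop_nhds_zero_nat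
      have := Filter.Tendsto.const_sub (1:ℝ) this
      simpa using this
    have := h1.smul_const R
    simpa using this
  exact (hclosed β hβ0).mem_of_tendsto hlim (Filter.Eventually.of_forall key)
end
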